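/- arXiv:2001.01867 — 5 statements merged into one kernel-verified Lean document; each statement's English description precedes it below -/
import Mathlib

section
/- Let r ≥ 1 and D_1, D_2 : ℤ_{≥r} → (0,∞) with the convention D_i(r−1) = 1, and write D = (D_1,D_2). Then for any integers r ≤ u ≤ v, D[(u,2)→(v,1)] = (𝒯_{r,1}D)[(u, 2∧(u−r+1)) → (v,1)], where the left-hand side is the single-path partition function Σ over up-right paths from (u,2) to (v,1) of the product of vertex weights D_m(x)/D_m(x−1), and on the right-hand side the starting point is (u,1) when u = r and (u,2) when u > r. -/
open scoped BigOperators

/-- Value of `f : ℤ_{≥ r} → ℝ`, with the convention that values below the domain base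
`r` equal `1`. -/
noncomputable def clo (r : ℤ) (f : ℤ → ℝ) (y : ℤ) : ℝ := if y < r then 1 else f y

/-- The sum `Σ_{m=r}^{x} g(m)/f(m−1)` with the convention `f(r−1) = 1`. -/
noncomputable def pitSum (r : ℤ) (f g : ℤ → ℝ) (x : ℤ) : ℝ :=
  ∑ m ∈ Finset.Icc r x, g m / clo r f (m - 1)

/-- `(g ⊙ f)(x) = f(x) · Σ_{m=r}^{x} g(m)/f(m−1)`, for `f, g : ℤ_{≥r} → (0,∞)`. -/
noncomputable def odot (r : ℤ) (g f : ℤ → ℝ) : ℤ → ℝ := fun x => f x * pitSum r f g x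

/-- `(f ⊗ g)(x) = g(x) · (Σ_{m=r}^{x} g(m)/f(m−1))⁻¹`, for `f, g : ℤ_{≥r} → (0,∞)`. -/
noncomputable def otimes (r : ℤ) (f g : ℤ → ℝ) : ℤ → ℝ := fun x => g x * (pitSum r f g x)⁻¹

/-- The operator `𝒯_{r,m}`: replaces `(D_m, D_{m+1})` by `(D_{m+1}⊙D_m, D_m⊗D_{m+1})`
and leaves the other entries unchanged. -/
noncomputable def Tro (r m : ℤ) (D : ℤ → ℤ → ℝ) : ℤ → ℤ → ℝ :=
  fun i => if i = m then odot r (D (m + 1)) (D m)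
    else if i = m + 1 then otimes r (D m) (D (m + 1))
    else D i

/-- A lattice step: one to the right, or down one level. -/
def IsStep (p q : ℤ × ℤ) : Prop :=
  (q.1 = p.1 + 1 ∧ q.2 = p.2) ∨ (q.1 = p.1 ∧ q.2 = p.2 - 1)

/-- A non-intersecting multipath from `U` to `V`; points `(x, m)` must satisfy the
domain condition `x ≥ rl m`, and the paths are pairwise disjoint as sets of points. -/
structure Multipath (rl : ℤ → ℤ) {k : ℕ} (U V : Fin k → ℤ × ℤ) where
  pts : Fin k → List (ℤ × ℤ)
  ne : ∀ i, pts i ≠ []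
  chain : ∀ i, (pts i).Chain' IsStep
  head : ∀ i, (pts i).head? = some (U i)
  last : ∀ i, (pts i).getLast? = some (V i)
  dom : ∀ i, ∀ p ∈ pts i, rl p.2 ≤ p.1
  disj : ∀ i j, i ≠ j → ∀ p ∈ pts i, p ∉ pts j

/-- The weight of a single path: the product of `D_m(x)/D_m(x−1)` over its points,
with the convention `D_m(r_m − 1) = 1`. -/
noncomputable def pathWeight (rl : ℤ → ℤ) (D : ℤ → ℤ → ℝ) (l : List (ℤ × ℤ)) : ℝ :=
  (l.map (fun p => D p.2 p.1 / clo (rl p.2) (D p.2) (p.1 - 1))).prod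

/-- The partition function `D[U → V]`: the sum over non-intersecting multipaths from
`U` to `V` of the product of the weights of the paths (a finite sum, written as a
`tsum` over the type of multipaths; it is `0` if no multipath exists). -/
noncomputable def partFn (rl : ℤ → ℤ) (D : ℤ → ℤ → ℝ) {k : ℕ} (U V : Fin k → ℤ × ℤ) : ℝ :=
  ∑' π : Multipath rl U V, ∏ i, pathWeight rl D (π.pts i)


namespace SPI

/-- Horizontal segment at level `m` from `a` to `b`. -/
def seg (m a b : ℤ) : List (ℤ × ℤ) :=
  (List.range (b - a + 1).toNat).map (fun i : ℕ => (a + (i : ℤ), m))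

lemma seg_nil (m a b : ℤ) (h : b < a) : seg m a b = [] := by
  unfold seg
  have : (b - a + 1).toNat = 0 := by omega
  simp [this]

lemma seg_self (m a : ℤ) : seg m a a = [(a, m)] := by
  unfold seg
  have : (a - a + 1).toNat = 1 := by omega
  rw [this, List.range_succ, List.range_zero, List.nil_append, List.map_cons, List.map_nil]
  norm_num

lemma seg_cons (m a b : ℤ) (h : a ≤ b) : seg m a b = (a, m) :: seg m (a + 1) b := by
  unfold seg
  have h1 : (b - a + 1).toNat = (b - (a + 1) + 1).toNat + 1 := by omega
  rw [h1, List.range_succ_eq_map, List.map_cons, List.map_map]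
  simp only [Nat.cast_zero, add_zero, List.cons.injEq, true_and]
  congr 1
  funext i
  simp only [Function.comp_apply, Nat.succ_eq_add_one, Prod.mk.injEq, and_true]
  push_cast
  ring

lemma seg_snoc (m a b : ℤ) (h : a ≤ b + 1) : seg m a (b + 1) = seg m a b ++ [(b + 1, m)] := by
  unfold seg
  have h1 : (b + 1 - a + 1).toNat = (b - a + 1).toNat + 1 := by omega
  have h2 : a + (((b - a + 1).toNat : ℕ) : ℤ) = b + 1 := by omega
  rw [h1, List.range_succ, List.map_append, List.map_cons, List.map_nil, h2]

lemma mem_seg {p : ℤ × ℤ} {m a b : ℤ} : p ∈ seg m a b ↔ p.2 = m ∧ a ≤ p.1 ∧ p.1 ≤ b := by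
  unfold seg
  simp only [List.mem_map, List.mem_range]
  constructor
  · rintro ⟨i, hi, rfl⟩
    exact ⟨rfl, by omega, by omega⟩
  · rintro ⟨h2, ha, hb⟩
    refine ⟨(p.1 - a).toNat, by omega, ?_⟩
    have hx : a + ((p.1 - a).toNat : ℤ) = p.1 := by omega
    rw [hx, ← h2]

lemma seg_ne_nil (m a b : ℤ) (h : a ≤ b) : seg m a b ≠ [] := by
  rw [seg_cons m a b h]; simp

lemma head?_seg (m a b : ℤ) (h : a ≤ b) : (seg m a b).head? = some (a, m) := by
  rw [seg_cons m a b h]; rfl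

lemma getLast?_seg (m a b : ℤ) (h : a ≤ b) : (seg m a b).getLast? = some (b, m) := by
  rcases eq_or_lt_of_le h with rfl | hlt
  · rw [seg_self]; rfl
  · have hb : b = (b - 1) + 1 := by omega
    rw [hb, seg_snoc m a (b - 1) (by omega)]
    rw [List.getLast?_append_of_ne_nil _ (by simp)]
    rfl

lemma chain'_seg_aux (m : ℤ) : ∀ (n : ℕ) (a b : ℤ), (b - a + 1).toNat = n →
    (seg m a b).Chain' IsStep := by
  intro n
  induction n with
  | zero => intro a b h; rw [seg_nil m a b (by omega)]; exact List.isChain_nil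
  | succ n ih =>
    intro a b h
    have hab : a ≤ b := by omega
    rw [seg_cons m a b hab]
    rcases eq_or_lt_of_le hab with rfl | hlt
    · rw [seg_nil m (a + 1) a (by omega)]; exact List.isChain_singleton _
    · apply List.isChain_cons.mpr
      refine ⟨?_, ih (a + 1) b (by omega)⟩
      intro y hy
      rw [head?_seg m (a + 1) b (by omega)] at hy
      simp only [Option.mem_def, Option.some.injEq] at hy
      subst hy
      exact Or.inl ⟨rfl, rfl⟩

lemma chain'_seg (m a b : ℤ) : (seg m a b).Chain' IsStep := chain'_seg_aux m _ a b rfl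

/-- The path from `(u,2)` to `(v,1)` that drops to level 1 at `x`-coordinate `t`. -/
def pathAt (u v t : ℤ) : List (ℤ × ℤ) := seg 2 u t ++ seg 1 t v

lemma level_mono : ∀ (l : List (ℤ × ℤ)), l.Chain' IsStep → ∀ p q : ℤ × ℤ,
    l.head? = some p → l.getLast? = some q → q.2 ≤ p.2 := by
  intro l
  induction l with
  | nil => intro _ p q h; simp at h
  | cons x rest ih =>
    intro hc p q hh hl
    simp only [List.head?_cons, Option.some.injEq] at hh
    subst hh
    cases rest with
    | nil =>
      simp only [List.getLast?_singleton, Option.some.injEq] at hl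
      subst hl; exact le_refl _
    | cons y rest' =>
      obtain ⟨hs, hc'⟩ := List.isChain_cons_cons.mp hc
      rw [List.getLast?_cons_cons] at hl
      have h1 := ih hc' y q rfl hl
      rcases hs with ⟨_, h2⟩ | ⟨_, h2⟩ <;> omega

lemma classify_level : ∀ (l : List (ℤ × ℤ)) (m a b : ℤ), l.Chain' IsStep →
    l.head? = some (a, m) → l.getLast? = some (b, m) → a ≤ b ∧ l = seg m a b := by
  intro l
  induction l with
  | nil => intro m a b _ h; simp at h
  | cons x rest ih =>
    intro m a b hc hh hl
    simp only [List.head?_cons, Option.some.injEq] at hh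
    subst hh
    cases rest with
    | nil =>
      simp only [List.getLast?_singleton, Option.some.injEq, Prod.mk.injEq] at hl
      obtain ⟨rfl, -⟩ := hl
      exact ⟨le_refl _, (seg_self m a).symm⟩
    | cons y rest' =>
      obtain ⟨hs, hc'⟩ := List.isChain_cons_cons.mp hc
      rw [List.getLast?_cons_cons] at hl
      rcases hs with ⟨h1, h2⟩ | ⟨h1, h2⟩
      · have hy : y = (a + 1, m) := by
          obtain ⟨y1, y2⟩ := y
          simp only [Prod.mk.injEq]
          exact ⟨h1, h2⟩
        subst hy
        obtain ⟨hab, hrest⟩ := ih m (a + 1) b hc' rfl hl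
        refine ⟨by omega, ?_⟩
        rw [seg_cons m a b (by omega), ← hrest]
      · exfalso
        have := level_mono (y :: rest') hc' y (b, m) rfl hl
        simp only at h2
        omega

lemma classify_main : ∀ (l : List (ℤ × ℤ)) (u v : ℤ), l.Chain' IsStep →
    l.head? = some (u, 2) → l.getLast? = some (v, 1) →
    ∃ t, u ≤ t ∧ t ≤ v ∧ l = pathAt u v t := by
  intro l
  induction l with
  | nil => intro u v _ h; simp at h
  | cons x rest ih =>
    intro u v hc hh hl
    simp only [List.head?_cons, Option.some.injEq] at hh
    subst hh
    cases rest with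
    | nil =>
      simp only [List.getLast?_singleton, Option.some.injEq, Prod.mk.injEq] at hl
      omega
    | cons y rest' =>
      obtain ⟨hs, hc'⟩ := List.isChain_cons_cons.mp hc
      rw [List.getLast?_cons_cons] at hl
      rcases hs with ⟨h1, h2⟩ | ⟨h1, h2⟩
      · have hy : y = (u + 1, 2) := by
          obtain ⟨y1, y2⟩ := y
          simp only [Prod.mk.injEq]
          exact ⟨h1, h2⟩
        subst hy
        obtain ⟨t, ht1, ht2, hrest⟩ := ih (u + 1) v hc' rfl hl
        refine ⟨t, by omega, ht2, ?_⟩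
        unfold pathAt at hrest ⊢
        rw [seg_cons 2 u t (by omega), List.cons_append, ← hrest]
      · have hy : y = (u, 1) := by
          obtain ⟨y1, y2⟩ := y
          simp only [Prod.mk.injEq]
          constructor
          · exact h1
          · simpa using h2
        subst hy
        obtain ⟨huv, hrest⟩ := classify_level (((u, 1)) :: rest') 1 u v hc' rfl hl
        refine ⟨u, le_refl _, huv, ?_⟩
        unfold pathAt
        rw [seg_self 2 u, ← hrest]
        rfl

lemma mem_pathAt {p : ℤ × ℤ} {u v t : ℤ} :
    p ∈ pathAt u v t ↔ (p.2 = 2 ∧ u ≤ p.1 ∧ p.1 ≤ t) ∨ (p.2 = 1 ∧ t ≤ p.1 ∧ p.1 ≤ v) := by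
  unfold pathAt
  rw [List.mem_append, mem_seg, mem_seg]

lemma pathAt_ne_nil {u v t : ℤ} (h : u ≤ t) : pathAt u v t ≠ [] := by
  unfold pathAt
  rw [seg_cons 2 u t h, List.cons_append]
  simp

lemma pathAt_chain {u v t : ℤ} (h1 : u ≤ t) (h2 : t ≤ v) : (pathAt u v t).Chain' IsStep := by
  refine List.IsChain.append (chain'_seg 2 u t) (chain'_seg 1 t v) ?_
  intro x hx y hy
  rw [getLast?_seg 2 u t h1] at hx
  rw [head?_seg 1 t v h2] at hy
  simp only [Option.mem_def, Option.some.injEq] at hx hy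
  subst hx; subst hy
  exact Or.inr ⟨rfl, by norm_num⟩

lemma pathAt_head {u v t : ℤ} (h1 : u ≤ t) : (pathAt u v t).head? = some (u, 2) := by
  unfold pathAt
  rw [seg_cons 2 u t h1]
  rfl

lemma pathAt_last {u v t : ℤ} (h1 : u ≤ t) (h2 : t ≤ v) :
    (pathAt u v t).getLast? = some (v, 1) := by
  unfold pathAt
  rw [List.getLast?_append_of_ne_nil _ (seg_ne_nil 1 t v h2), getLast?_seg 1 t v h2]

lemma pathAt_inj {u v t t' : ℤ} (h1 : u ≤ t) (h2 : t ≤ v) (g1 : u ≤ t') (g2 : t' ≤ v)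
    (he : pathAt u v t = pathAt u v t') : t = t' := by
  have m1 : ((t : ℤ), (1 : ℤ)) ∈ pathAt u v t := mem_pathAt.mpr (Or.inr ⟨rfl, le_refl _, h2⟩)
  have m2 : ((t' : ℤ), (1 : ℤ)) ∈ pathAt u v t' := mem_pathAt.mpr (Or.inr ⟨rfl, le_refl _, g2⟩)
  rw [he] at m1
  rw [← he] at m2
  rw [mem_pathAt] at m1 m2
  simp only at m1 m2
  omega

lemma clo_pos {r : ℤ} {f : ℤ → ℝ} (hf : ∀ x, r ≤ x → 0 < f x) (y : ℤ) : 0 < clo r f y := by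
  unfold clo
  split
  · exact one_pos
  · exact hf y (by omega)

lemma clo_of_lt {r : ℤ} {f : ℤ → ℝ} {y : ℤ} (h : y < r) : clo r f y = 1 := if_pos h

lemma clo_of_le {r : ℤ} {f : ℤ → ℝ} {y : ℤ} (h : r ≤ y) : clo r f y = f y := if_neg (by omega)

lemma pathWeight_append (rl : ℤ → ℤ) (D : ℤ → ℤ → ℝ) (l1 l2 : List (ℤ × ℤ)) :
    pathWeight rl D (l1 ++ l2) = pathWeight rl D l1 * pathWeight rl D l2 := by
  unfold pathWeight
  rw [List.map_append, List.prod_append]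

lemma Icc_succ_right' {a b : ℤ} (h : a ≤ b + 1) :
    Finset.Icc a (b + 1) = insert (b + 1) (Finset.Icc a b) := by
  ext x
  simp only [Finset.mem_Icc, Finset.mem_insert]
  omega

lemma pathWeight_seg_aux (rl : ℤ → ℤ) (D : ℤ → ℤ → ℝ) (m : ℤ) :
    ∀ (n : ℕ) (a b : ℤ), (b - a + 1).toNat = n →
    pathWeight rl D (seg m a b) = ∏ x ∈ Finset.Icc a b, D m x / clo (rl m) (D m) (x - 1) := by
  intro n
  induction n with
  | zero =>
    intro a b h
    rw [seg_nil m a b (by omega), Finset.Icc_eq_empty (by omega), Finset.prod_empty]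
    rfl
  | succ n ih =>
    intro a b h
    have hab : a ≤ b := by omega
    rcases eq_or_lt_of_le hab with rfl | hlt
    · rw [seg_self, Finset.Icc_self, Finset.prod_singleton]
      unfold pathWeight
      simp
    · have hb : b = (b - 1) + 1 := by omega
      rw [hb, seg_snoc m a (b - 1) (by omega), pathWeight_append,
        ih a (b - 1) (by omega), Icc_succ_right' (by omega),
        Finset.prod_insert (by simp only [Finset.mem_Icc]; omega)]
      have : pathWeight rl D [(b - 1 + 1, m)]
          = D m (b - 1 + 1) / clo (rl m) (D m) (b - 1 + 1 - 1) := by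
        unfold pathWeight; simp
      rw [this]
      ring

lemma pathWeight_seg (rl : ℤ → ℤ) (D : ℤ → ℤ → ℝ) (m a b : ℤ) :
    pathWeight rl D (seg m a b) = ∏ x ∈ Finset.Icc a b, D m x / clo (rl m) (D m) (x - 1) :=
  pathWeight_seg_aux rl D m _ a b rfl

lemma prod_telescope {r : ℤ} {f : ℤ → ℝ} (hf : ∀ x, r ≤ x → 0 < f x) {a : ℤ} (ha : r ≤ a) :
    ∀ b, a - 1 ≤ b → ∏ x ∈ Finset.Icc a b, f x / clo r f (x - 1)
      = clo r f b / clo r f (a - 1) := by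
  refine Int.le_induction ?_ ?_
  · rw [Finset.Icc_eq_empty (by omega), Finset.prod_empty,
      div_self (ne_of_gt (clo_pos hf _))]
  · intro b hb ih
    rw [Icc_succ_right' (by omega), Finset.prod_insert (by simp only [Finset.mem_Icc]; omega), ih]
    have h1 : clo r f (b + 1) = f (b + 1) := clo_of_le (by omega)
    have h2 : clo r f b ≠ 0 := ne_of_gt (clo_pos hf _)
    have h3 : clo r f (a - 1) ≠ 0 := ne_of_gt (clo_pos hf _)
    rw [h1]
    rw [show b + 1 - 1 = b by ring]
    field_simp

lemma sum_telescope' (g : ℤ → ℝ) (a : ℤ) :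
    ∀ b, a - 1 ≤ b → ∑ t ∈ Finset.Icc a b, (g (t - 1) - g t) = g (a - 1) - g b := by
  refine Int.le_induction ?_ ?_
  · rw [Finset.Icc_eq_empty (by omega), Finset.sum_empty]; ring
  · intro b hb ih
    rw [Icc_succ_right' (by omega), Finset.sum_insert (by simp only [Finset.mem_Icc]; omega), ih]
    have : b + 1 - 1 = b := by ring
    rw [this]
    ring

lemma pitSum_pos {r : ℤ} {f g : ℤ → ℝ} (hf : ∀ x, r ≤ x → 0 < f x)
    (hg : ∀ x, r ≤ x → 0 < g x) {x : ℤ} (hx : r ≤ x) : 0 < pitSum r f g x := by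
  unfold pitSum
  refine Finset.sum_pos ?_ ⟨r, by simp [Finset.mem_Icc]; omega⟩
  intro m hm
  rw [Finset.mem_Icc] at hm
  exact div_pos (hg m hm.1) (clo_pos hf _)

lemma pitSum_split {r u v : ℤ} (f g : ℤ → ℝ) (h1 : r ≤ u) (h2 : u - 1 ≤ v) :
    pitSum r f g v = pitSum r f g (u - 1) + ∑ t ∈ Finset.Icc u v, g t / clo r f (t - 1) := by
  unfold pitSum
  have e1 : Finset.Icc r v = Finset.Ioc (r - 1) v := by
    ext x; simp only [Finset.mem_Icc, Finset.mem_Ioc]; omega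
  have e2 : Finset.Icc r (u - 1) = Finset.Ioc (r - 1) (u - 1) := by
    ext x; simp only [Finset.mem_Icc, Finset.mem_Ioc]; omega
  have e3 : Finset.Icc u v = Finset.Ioc (u - 1) v := by
    ext x; simp only [Finset.mem_Icc, Finset.mem_Ioc]; omega
  rw [e1, e2, e3]
  have hunion : Finset.Ioc (r - 1) (u - 1) ∪ Finset.Ioc (u - 1) v = Finset.Ioc (r - 1) v :=
    Finset.Ioc_union_Ioc_eq_Ioc (by omega) (by omega)
  have hdisj : Disjoint (Finset.Ioc (r - 1) (u - 1)) (Finset.Ioc (u - 1) v) := by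
    rw [Finset.disjoint_left]
    intro x hx hx'
    simp only [Finset.mem_Ioc] at hx hx'
    omega
  rw [← hunion, Finset.sum_union hdisj]

lemma pitSum_base {r : ℤ} (f g : ℤ → ℝ) : pitSum r f g r = g r := by
  unfold pitSum
  rw [Finset.Icc_self, Finset.sum_singleton, clo_of_lt (by omega), div_one]

lemma mp_ext {rl : ℤ → ℤ} {k : ℕ} {U V : Fin k → ℤ × ℤ} {π π' : Multipath rl U V}
    (h : π.pts = π'.pts) : π = π' := by
  cases π
  cases π'
  simp only at h
  subst h
  rfl

/-- The multipath consisting of the single path `pathAt u v t`. -/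
def mp2 (rl : ℤ → ℤ) (u v t : ℤ) (h1 : u ≤ t) (h2 : t ≤ v) (hd2 : rl 2 ≤ u) (hd1 : rl 1 ≤ u) :
    Multipath rl (fun _ : Fin 1 => (u, 2)) (fun _ => (v, 1)) where
  pts := fun _ => pathAt u v t
  ne := fun _ => pathAt_ne_nil h1
  chain := fun _ => pathAt_chain h1 h2
  head := fun _ => pathAt_head h1
  last := fun _ => pathAt_last h1 h2
  dom := fun _ p hp => by
    rw [mem_pathAt] at hp
    rcases hp with ⟨e, hp1, hp2⟩ | ⟨e, hp1, hp2⟩ <;> rw [e] <;> omega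
  disj := fun i j hij => absurd (Subsingleton.elim i j) hij

lemma partFn_eq_sum (rl : ℤ → ℤ) (D : ℤ → ℤ → ℝ) (u v : ℤ) (huv : u ≤ v)
    (hd2 : rl 2 ≤ u) (hd1 : rl 1 ≤ u) :
    partFn rl D (fun _ : Fin 1 => (u, 2)) (fun _ => (v, 1))
      = ∑ t ∈ Finset.Icc u v, pathWeight rl D (pathAt u v t) := by
  classical
  set U : Fin 1 → ℤ × ℤ := fun _ => (u, 2) with hU
  set V : Fin 1 → ℤ × ℤ := fun _ => (v, 1) with hV
  have hcls : ∀ π : Multipath rl U V, ∃ t, u ≤ t ∧ t ≤ v ∧ π.pts 0 = pathAt u v t :=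
    fun π => classify_main (π.pts 0) u v (π.chain 0) (π.head 0) (π.last 0)
  let F : {t // t ∈ Finset.Icc u v} → Multipath rl U V := fun t => by
    have ht := Finset.mem_Icc.mp t.2
    exact mp2 rl u v t.1 ht.1 ht.2 hd2 hd1
  have hF : ∀ t, (F t).pts = fun _ => pathAt u v t.1 := fun t => rfl
  let G : Multipath rl U V → {t // t ∈ Finset.Icc u v} := fun π =>
    ⟨Classical.choose (hcls π), Finset.mem_Icc.mpr
      ⟨(Classical.choose_spec (hcls π)).1, (Classical.choose_spec (hcls π)).2.1⟩⟩
  have hGF : ∀ t, G (F t) = t := by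
    intro t
    have ht := Finset.mem_Icc.mp t.2
    obtain ⟨h1, h2, h3⟩ := Classical.choose_spec (hcls (F t))
    have : (F t).pts 0 = pathAt u v t.1 := by rw [hF t]
    exact Subtype.ext (pathAt_inj h1 h2 ht.1 ht.2 (h3.symm.trans this))
  have hFG : ∀ π, F (G π) = π := by
    intro π
    obtain ⟨h1, h2, h3⟩ := Classical.choose_spec (hcls π)
    refine mp_ext ?_
    funext i
    have hi : i = 0 := Subsingleton.elim i 0
    rw [hF, hi, ← h3]
  let e : {t // t ∈ Finset.Icc u v} ≃ Multipath rl U V := ⟨F, G, hGF, hFG⟩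
  unfold partFn
  rw [← e.tsum_eq]
  have he : ∀ t : {t // t ∈ Finset.Icc u v},
      (∏ i, pathWeight rl D ((e t).pts i)) = pathWeight rl D (pathAt u v t.1) := by
    intro t
    rw [Fin.prod_univ_one]
    congr 1
  rw [tsum_congr he]
  exact Finset.tsum_subtype (Finset.Icc u v) (fun t => pathWeight rl D (pathAt u v t))

/-- The multipath consisting of the single level-1 path. -/
def mp1 (rl : ℤ → ℤ) (u v : ℤ) (h : u ≤ v) (hd1 : rl 1 ≤ u) :
    Multipath rl (fun _ : Fin 1 => (u, 1)) (fun _ => (v, 1)) where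
  pts := fun _ => seg 1 u v
  ne := fun _ => seg_ne_nil 1 u v h
  chain := fun _ => chain'_seg 1 u v
  head := fun _ => head?_seg 1 u v h
  last := fun _ => getLast?_seg 1 u v h
  dom := fun _ p hp => by
    rw [mem_seg] at hp
    obtain ⟨e, hp1, hp2⟩ := hp
    rw [e]
    omega
  disj := fun i j hij => absurd (Subsingleton.elim i j) hij

lemma partFn_eq_single (rl : ℤ → ℤ) (D : ℤ → ℤ → ℝ) (u v : ℤ) (huv : u ≤ v) (hd1 : rl 1 ≤ u) :
    partFn rl D (fun _ : Fin 1 => (u, 1)) (fun _ => (v, 1)) = pathWeight rl D (seg 1 u v) := by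
  classical
  set U : Fin 1 → ℤ × ℤ := fun _ => (u, 1) with hU
  set V : Fin 1 → ℤ × ℤ := fun _ => (v, 1) with hV
  have huniq : ∀ π : Multipath rl U V, π = mp1 rl u v huv hd1 := by
    intro π
    obtain ⟨-, hπ⟩ := classify_level (π.pts 0) 1 u v (π.chain 0) (π.head 0) (π.last 0)
    refine mp_ext ?_
    funext i
    have hi : i = 0 := Subsingleton.elim i 0
    rw [hi, hπ]
    rfl
  unfold partFn
  rw [tsum_eq_single (mp1 rl u v huv hd1) (fun π' hne => absurd (huniq π') hne)]
  rw [Fin.prod_univ_one]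
  rfl

end SPI

open SPI in
/-- **Step 1 of the proof of Theorem 2.6** (`n = 2`, `k = 1`): for `D_1, D_2 : ℤ_{≥r} → (0,∞)`
and `r ≤ u ≤ v`, `D[(u,2)→(v,1)] = (𝒯_{r,1}D)[(u, 2∧(u−r+1)) → (v,1)]`. -/
theorem single_path_invariance (r : ℤ) (hr : 1 ≤ r) (D : ℤ → ℤ → ℝ)
    (hD : ∀ i : ℤ, i = 1 ∨ i = 2 → ∀ x : ℤ, r ≤ x → 0 < D i x)
    (u v : ℤ) (hru : r ≤ u) (huv : u ≤ v) :
    partFn (fun _ => r) D (fun _ : Fin 1 => (u, 2)) (fun _ => (v, 1))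
      = partFn (fun i => if i = 2 then r + 1 else r) (Tro r 1 D)
          (fun _ : Fin 1 => (u, min 2 (u - r + 1))) (fun _ => (v, 1)) := by
  have hD1 : ∀ x, r ≤ x → 0 < D 1 x := fun x hx => hD 1 (Or.inl rfl) x hx
  have hD2 : ∀ x, r ≤ x → 0 < D 2 x := fun x hx => hD 2 (Or.inr rfl) x hx
  set S := pitSum r (D 1) (D 2) with hSdef
  have hS : ∀ x, r ≤ x → 0 < S x := fun x hx => pitSum_pos hD1 hD2 hx
  have hT1 : Tro r 1 D 1 = fun x => D 1 x * S x := by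
    unfold Tro odot
    norm_num
    rfl
  have hT2 : Tro r 1 D 2 = fun x => D 2 x * (S x)⁻¹ := by
    unfold Tro otimes
    norm_num
    rfl
  have hE1 : ∀ x, r ≤ x → 0 < D 1 x * S x := fun x hx => mul_pos (hD1 x hx) (hS x hx)
  have hE2 : ∀ x, r + 1 ≤ x → 0 < D 2 x * (S x)⁻¹ :=
    fun x hx => mul_pos (hD2 x (by omega)) (inv_pos.mpr (hS x (by omega)))
  have hLHS : partFn (fun _ => r) D (fun _ : Fin 1 => (u, 2)) (fun _ => (v, 1))
      = ∑ t ∈ Finset.Icc u v,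
        (clo r (D 2) t / clo r (D 2) (u - 1)) * (clo r (D 1) v / clo r (D 1) (t - 1)) := by
    rw [partFn_eq_sum _ D u v huv hru hru]
    refine Finset.sum_congr rfl ?_
    intro t ht
    rw [Finset.mem_Icc] at ht
    unfold pathAt
    rw [pathWeight_append, pathWeight_seg, pathWeight_seg]
    rw [show ∏ x ∈ Finset.Icc u t, D 2 x / clo ((fun _ : ℤ => r) 2) (D 2) (x - 1)
        = ∏ x ∈ Finset.Icc u t, D 2 x / clo r (D 2) (x - 1) from rfl]
    rw [show ∏ x ∈ Finset.Icc t v, D 1 x / clo ((fun _ : ℤ => r) 1) (D 1) (x - 1)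
        = ∏ x ∈ Finset.Icc t v, D 1 x / clo r (D 1) (x - 1) from rfl]
    rw [prod_telescope hD2 hru t (by omega),
      prod_telescope hD1 (le_trans hru ht.1) v (by omega)]
  rcases eq_or_lt_of_le hru with heq | hrlt
  · -- case u = r
    subst heq
    have hmin : min 2 (r - r + 1) = 1 := by omega
    rw [hmin]
    rw [partFn_eq_single _ (Tro r 1 D) r v huv (by norm_num)]
    rw [pathWeight_seg]
    rw [show ∏ x ∈ Finset.Icc r v, Tro r 1 D 1 x
          / clo ((fun i : ℤ => if i = 2 then r + 1 else r) 1) (Tro r 1 D 1) (x - 1)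
        = ∏ x ∈ Finset.Icc r v, (fun x => D 1 x * S x) x
          / clo r (fun x => D 1 x * S x) (x - 1) by rw [hT1]; norm_num]
    rw [prod_telescope hE1 (le_refl r) v (by omega)]
    rw [clo_of_lt (show r - 1 < r by omega), div_one, clo_of_le (le_trans (le_refl r) huv)]
    rw [hLHS, clo_of_lt (show r - 1 < r by omega)]
    have hSv : S v = ∑ m ∈ Finset.Icc r v, D 2 m / clo r (D 1) (m - 1) := rfl
    rw [hSv, Finset.mul_sum]
    refine Finset.sum_congr rfl ?_
    intro t ht
    rw [Finset.mem_Icc] at ht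
    rw [clo_of_le (le_trans (le_refl r) ht.1), clo_of_le (show r ≤ v from huv)]
    ring
  · -- case r < u
    have hmin : min 2 (u - r + 1) = 2 := by omega
    rw [hmin]
    rw [partFn_eq_sum _ (Tro r 1 D) u v huv (by norm_num; omega) (by norm_num; omega)]
    have hC0 : (0:ℝ) < clo (r + 1) (fun x => D 2 x * (S x)⁻¹) (u - 1) := clo_pos hE2 _
    set C := clo (r + 1) (fun x => D 2 x * (S x)⁻¹) (u - 1) with hCdef
    have hRHS : ∀ t ∈ Finset.Icc u v,
        pathWeight (fun i => if i = 2 then r + 1 else r) (Tro r 1 D) (pathAt u v t)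
          = ((S (t - 1))⁻¹ - (S t)⁻¹) * (D 1 v * S v / C) := by
      intro t ht
      rw [Finset.mem_Icc] at ht
      unfold pathAt
      rw [pathWeight_append, pathWeight_seg, pathWeight_seg]
      rw [show ∏ x ∈ Finset.Icc u t, Tro r 1 D 2 x
            / clo ((fun i : ℤ => if i = 2 then r + 1 else r) 2) (Tro r 1 D 2) (x - 1)
          = ∏ x ∈ Finset.Icc u t, (fun x => D 2 x * (S x)⁻¹) x
            / clo (r + 1) (fun x => D 2 x * (S x)⁻¹) (x - 1) by rw [hT2]; norm_num]
      rw [show ∏ x ∈ Finset.Icc t v, Tro r 1 D 1 x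
            / clo ((fun i : ℤ => if i = 2 then r + 1 else r) 1) (Tro r 1 D 1) (x - 1)
          = ∏ x ∈ Finset.Icc t v, (fun x => D 1 x * S x) x
            / clo r (fun x => D 1 x * S x) (x - 1) by rw [hT1]; norm_num]
      rw [prod_telescope hE2 (show r + 1 ≤ u by omega) t (by omega),
        prod_telescope hE1 (show r ≤ t by omega) v (by omega)]
      rw [← hCdef]
      rw [clo_of_le (show r + 1 ≤ t by omega), clo_of_le (show r ≤ v by omega),
        clo_of_le (show r ≤ t - 1 by omega)]
      -- now: (D 2 t * (S t)⁻¹ / C) * (D 1 v * S v / (D 1 (t-1) * S (t-1))) = ...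
      have hstep : S t = S (t - 1) + D 2 t / clo r (D 1) (t - 1) := by
        rw [hSdef, pitSum_split (D 1) (D 2) (show r ≤ t by omega) (show t - 1 ≤ t by omega),
          Finset.Icc_self, Finset.sum_singleton]
      rw [clo_of_le (show r ≤ t - 1 by omega)] at hstep
      have h2t : D 2 t = (S t - S (t - 1)) * D 1 (t - 1) := by
        have hne : D 1 (t - 1) ≠ 0 := ne_of_gt (hD1 _ (by omega))
        field_simp at hstep ⊢
        linarith [hstep]
      rw [h2t]
      have hne1 : D 1 (t - 1) ≠ 0 := ne_of_gt (hD1 _ (by omega))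
      have hne2 : S (t - 1) ≠ 0 := ne_of_gt (hS _ (by omega))
      have hne3 : S t ≠ 0 := ne_of_gt (hS _ (by omega))
      have hne4 : C ≠ 0 := ne_of_gt hC0
      field_simp
    rw [Finset.sum_congr rfl hRHS, ← Finset.sum_mul,
      sum_telescope' (fun x => (S x)⁻¹) u v (by omega)]
    -- RHS is now ((S (u-1))⁻¹ - (S v)⁻¹) * (D 1 v * S v / C)
    have hC : C * S (u - 1) = D 2 (u - 1) := by
      rcases eq_or_lt_of_le (show r ≤ u - 1 by omega) with heq | hlt2
      · rw [hCdef, clo_of_lt (by omega), one_mul, ← heq, hSdef, pitSum_base]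
      · rw [hCdef, clo_of_le (by omega)]
        have : S (u - 1) ≠ 0 := ne_of_gt (hS _ (by omega))
        field_simp
    have hX : S v = S (u - 1) + ∑ t ∈ Finset.Icc u v, D 2 t / clo r (D 1) (t - 1) :=
      pitSum_split (D 1) (D 2) hru (by omega)
    rw [hLHS, clo_of_le (show r ≤ u - 1 by omega)]
    have hLHS2 : ∑ t ∈ Finset.Icc u v,
        (clo r (D 2) t / D 2 (u - 1)) * (clo r (D 1) v / clo r (D 1) (t - 1))
        = (D 1 v / D 2 (u - 1)) * ∑ t ∈ Finset.Icc u v, D 2 t / clo r (D 1) (t - 1) := by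
      rw [Finset.mul_sum]
      refine Finset.sum_congr rfl ?_
      intro t ht
      rw [Finset.mem_Icc] at ht
      rw [clo_of_le (show r ≤ t by omega), clo_of_le (show r ≤ v by omega)]
      ring
    rw [hLHS2]
    have hXv : ∑ t ∈ Finset.Icc u v, D 2 t / clo r (D 1) (t - 1) = S v - S (u - 1) := by
      linarith [hX]
    rw [hXv]
    have hne2 : S (u - 1) ≠ 0 := ne_of_gt (hS _ (by omega))
    have hne3 : S v ≠ 0 := ne_of_gt (hS _ (by omega))
    have hne4 : C ≠ 0 := ne_of_gt hC0
    have hne5 : D 2 (u - 1) ≠ 0 := ne_of_gt (hD2 _ (by omega))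
    rw [← hC]
    field_simp
end

section
/- Let r ≥ 1 and D_1, D_2 : ℤ_{≥r} → (0,∞) with the convention D_i(r−1) = 1, and write D = (D_1,D_2). Let U = ((u_1,2),…,(u_k,2)) and V = ((v_1,1),…,(v_k,1)) with r ≤ u_1 < … < u_k and r ≤ v_1 < … < v_k be an endpoint pair. Then D[U→V] = (𝒯_{r,1}D)[⇑_{r,1}U → V], where ⇑_{r,1}U := ((u_1, 2∧(u_1−r+1)),…,(u_k, 2∧(u_k−r+1))). -/
open scoped BigOperators

/-! ### Segments -/

def segN (m a : ℤ) : ℕ → List (ℤ × ℤ)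
  | 0 => []
  | n+1 => (a, m) :: segN m (a+1) n

def seg (m a b : ℤ) : List (ℤ × ℤ) := segN m a (b - a + 1).toNat

theorem mem_segN {p : ℤ × ℤ} {m a : ℤ} : ∀ {n : ℕ}, (p ∈ segN m a n ↔ p.2 = m ∧ a ≤ p.1 ∧ p.1 < a + n) := by
  intro n
  induction n generalizing a with
  | zero => simp [segN]
  | succ n ih =>
    simp only [segN, List.mem_cons, ih]
    constructor
    · rintro (rfl | ⟨h1, h2, h3⟩) <;> simp <;> omega
    · rintro ⟨h1, h2, h3⟩
      rcases eq_or_lt_of_le h2 with h | h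
      · left; rw [Prod.ext_iff]; exact ⟨h.symm, h1⟩
      · right; exact ⟨h1, by omega, by omega⟩

theorem mem_seg {p : ℤ × ℤ} {m a b : ℤ} : p ∈ seg m a b ↔ p.2 = m ∧ a ≤ p.1 ∧ p.1 ≤ b := by
  rw [seg, mem_segN]
  omega

theorem segN_ne {m a : ℤ} {n : ℕ} (h : n ≠ 0) : segN m a n ≠ [] := by
  cases n with
  | zero => omega
  | succ n => simp [segN]

theorem seg_ne {m a b : ℤ} (h : a ≤ b) : seg m a b ≠ [] := by
  apply segN_ne; omega

theorem head?_segN {m a : ℤ} {n : ℕ} (h : n ≠ 0) : (segN m a n).head? = some (a, m) := by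
  cases n with
  | zero => omega
  | succ n => simp [segN]

theorem head?_seg {m a b : ℤ} (h : a ≤ b) : (seg m a b).head? = some (a, m) := by
  apply head?_segN; omega

theorem getLast?_segN {m : ℤ} : ∀ {n : ℕ} {a : ℤ}, (segN m a (n+1)).getLast? = some (a + n, m) := by
  intro n
  induction n with
  | zero => intro a; simp [segN]
  | succ n ih =>
    intro a
    have : segN m a (n+2) = (a, m) :: segN m (a+1) (n+1) := rfl
    rw [this, List.getLast?_cons, ih]
    simp only [Option.getD_some, Option.some.injEq, Prod.mk.injEq]
    constructor
    · push_cast; ring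
    · trivial

theorem chain'_segN {m : ℤ} : ∀ {n : ℕ} {a : ℤ}, (segN m a n).Chain' IsStep := by
  intro n
  induction n with
  | zero => intro a; simp [segN, List.Chain']
  | succ n ih =>
    intro a
    cases n with
    | zero => simp [segN, List.Chain']
    | succ n' =>
      have : segN m a (n'+2) = (a, m) :: segN m (a+1) (n'+1) := rfl
      rw [this, List.Chain', List.isChain_cons]
      refine ⟨?_, ih⟩
      intro y hy
      rw [head?_segN (by omega)] at hy
      cases hy
      left; exact ⟨rfl, rfl⟩

theorem getLast?_seg {m a b : ℤ} (h : a ≤ b) : (seg m a b).getLast? = some (b, m) := by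
  have h1 : (b - a + 1).toNat = (b - a).toNat + 1 := by omega
  rw [seg, h1, getLast?_segN]
  congr 2
  omega

theorem chain'_seg {m a b : ℤ} : (seg m a b).Chain' IsStep := chain'_segN

/-- weight of a constant-level segment telescopes -/
theorem weight_segN (rl : ℤ → ℤ) (D : ℤ → ℤ → ℝ) {m a : ℤ}
    (hpos : ∀ x, rl m ≤ x → D m x ≠ 0) :
    ∀ {n : ℕ}, rl m ≤ a →
      pathWeight rl D (segN m a (n+1)) = D m (a + n) / clo (rl m) (D m) (a - 1) := by
  intro n
  induction n generalizing a with
  | zero =>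
    intro _
    simp [segN, pathWeight]
  | succ n ih =>
    intro ha
    have : segN m a (n+2) = (a, m) :: segN m (a+1) (n+1) := rfl
    rw [this]
    have hw : pathWeight rl D ((a, m) :: segN m (a+1) (n+1))
        = (D m a / clo (rl m) (D m) (a - 1)) * pathWeight rl D (segN m (a+1) (n+1)) := by
      simp [pathWeight]
    rw [hw, ih (by omega)]
    have hclo : clo (rl m) (D m) (a + 1 - 1) = D m a := by
      simp only [clo, add_sub_cancel_right]
      rw [if_neg (by omega)]
    rw [hclo]
    have hDa : D m a ≠ 0 := hpos a ha
    have : a + 1 + (n:ℤ) = a + ((n:ℤ)+1) := by ring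
    rw [this]
    rw [div_mul_div_comm, mul_comm (D m a) (D m (a + ((n:ℤ) + 1))),
      mul_div_mul_right _ _ hDa]
    congr 2

theorem weight_seg (rl : ℤ → ℤ) (D : ℤ → ℤ → ℝ) {m a b : ℤ}
    (hpos : ∀ x, rl m ≤ x → D m x ≠ 0) (ha : rl m ≤ a) (hab : a ≤ b) :
    pathWeight rl D (seg m a b) = D m b / clo (rl m) (D m) (a - 1) := by
  have h1 : (b - a + 1).toNat = (b - a).toNat + 1 := by omega
  rw [seg, h1, weight_segN rl D hpos ha]
  congr 2
  omega

theorem pathWeight_append (rl : ℤ → ℤ) (D : ℤ → ℤ → ℝ) (l1 l2 : List (ℤ × ℤ)) :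
    pathWeight rl D (l1 ++ l2) = pathWeight rl D l1 * pathWeight rl D l2 := by
  simp [pathWeight]

/-! ### Two-level paths -/

def path2 (a s b : ℤ) : List (ℤ × ℤ) := seg 2 a s ++ seg 1 s b

theorem path2_ne {a s b : ℤ} (h1 : a ≤ s) : path2 a s b ≠ [] := by
  simp only [path2, ne_eq, List.append_eq_nil_iff]
  intro ⟨h, _⟩
  exact seg_ne h1 h

theorem head?_path2 {a s b : ℤ} (h1 : a ≤ s) : (path2 a s b).head? = some (a, 2) := by
  rw [path2, List.head?_append_of_ne_nil _ (seg_ne h1)]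
  exact head?_seg h1

theorem getLast?_path2 {a s b : ℤ} (h2 : s ≤ b) : (path2 a s b).getLast? = some (b, 1) := by
  rw [path2, List.getLast?_append_of_ne_nil _ (seg_ne h2)]
  exact getLast?_seg h2

theorem chain'_path2 {a s b : ℤ} (h1 : a ≤ s) (h2 : s ≤ b) : (path2 a s b).Chain' IsStep := by
  rw [path2, List.Chain', List.isChain_append]
  refine ⟨chain'_seg, chain'_seg, ?_⟩
  intro x hx y hy
  rw [getLast?_seg h1] at hx
  rw [head?_seg h2] at hy
  cases hx; cases hy
  right; exact ⟨rfl, rfl⟩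

theorem mem_path2 {p : ℤ × ℤ} {a s b : ℤ} :
    p ∈ path2 a s b ↔ (p.2 = 2 ∧ a ≤ p.1 ∧ p.1 ≤ s) ∨ (p.2 = 1 ∧ s ≤ p.1 ∧ p.1 ≤ b) := by
  simp [path2, mem_seg]

theorem path2_inj {a s s' b : ℤ} (h1 : a ≤ s) (h2 : s ≤ b) (h1' : a ≤ s') (h2' : s' ≤ b)
    (h : path2 a s b = path2 a s' b) : s = s' := by
  have m1 : ((s, 2) : ℤ × ℤ) ∈ path2 a s b := mem_path2.2 (Or.inl ⟨rfl, h1, le_refl _⟩)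
  have m2 : ((s', 2) : ℤ × ℤ) ∈ path2 a s' b := mem_path2.2 (Or.inl ⟨rfl, h1', le_refl _⟩)
  rw [h] at m1
  rw [← h] at m2
  rw [mem_path2] at m1 m2
  simp at m1 m2
  omega

theorem weight_path2 (rl : ℤ → ℤ) (D : ℤ → ℤ → ℝ) {a s b : ℤ}
    (hpos2 : ∀ x, rl 2 ≤ x → D 2 x ≠ 0) (hpos1 : ∀ x, rl 1 ≤ x → D 1 x ≠ 0)
    (ha : rl 2 ≤ a) (hs : rl 1 ≤ s) (h1 : a ≤ s) (h2 : s ≤ b) :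
    pathWeight rl D (path2 a s b)
      = (D 2 s / clo (rl 2) (D 2) (a - 1)) * (D 1 b / clo (rl 1) (D 1) (s - 1)) := by
  rw [path2, pathWeight_append, weight_seg rl D hpos2 ha h1, weight_seg rl D hpos1 hs h2]

/-! ### Characterization of paths -/

theorem last_level_le : ∀ {l : List (ℤ × ℤ)} {p q : ℤ × ℤ}, l.Chain' IsStep →
    l.head? = some p → l.getLast? = some q → q.2 ≤ p.2 := by
  intro l
  induction l with
  | nil => intro p q _ h; simp at h
  | cons x t ih =>
    intro p q hc hh hl
    simp only [List.head?_cons, Option.some.injEq] at hh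
    subst hh
    cases t with
    | nil => simp at hl; subst hl; exact le_refl _
    | cons y t' =>
      rw [List.Chain', List.isChain_cons_cons] at hc
      have hyq : q.2 ≤ y.2 := ih hc.2 (by simp) (by rwa [List.getLast?_cons_cons] at hl)
      rcases hc.1 with ⟨_, h⟩ | ⟨_, h⟩ <;> omega

theorem char1 : ∀ {l : List (ℤ × ℤ)} {a b : ℤ}, l.Chain' IsStep →
    l.head? = some (a, 1) → l.getLast? = some (b, 1) → a ≤ b ∧ l = seg 1 a b := by
  intro l
  induction l with
  | nil => intro a b _ h; simp at h
  | cons x t ih =>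
    intro a b hc hh hl
    simp only [List.head?_cons, Option.some.injEq] at hh
    subst hh
    cases t with
    | nil =>
      simp only [List.getLast?_singleton, Option.some.injEq, Prod.mk.injEq] at hl
      have : a = b := hl.1
      subst this
      constructor
      · exact le_refl _
      · simp only [seg]
        have : (a - a + 1).toNat = 1 := by omega
        rw [this]
        rfl
    | cons y t' =>
      rw [List.Chain', List.isChain_cons_cons] at hc
      have hl' : (y :: t').getLast? = some (b, 1) := by rwa [List.getLast?_cons_cons] at hl
      rcases hc.1 with ⟨hy1, hy2⟩ | ⟨hy1, hy2⟩
      · -- y = (a+1, 1)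
        have hy : y = (a + 1, 1) := by
          rw [Prod.ext_iff]; exact ⟨hy1, hy2⟩
        subst hy
        obtain ⟨hab, hseg⟩ := ih hc.2 rfl hl'
        constructor
        · omega
        · rw [hseg]
          simp only [seg]
          have h1 : (b - a + 1).toNat = (b - (a+1) + 1).toNat + 1 := by omega
          rw [h1]
          rfl
      · -- y = (a, 0): impossible
        exfalso
        have hy : y.2 = 0 := by omega
        have := last_level_le hc.2 (l := y :: t') rfl hl'
        simp at this
        omega

theorem char2 : ∀ {l : List (ℤ × ℤ)} {a b : ℤ}, l.Chain' IsStep →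
    l.head? = some (a, 2) → l.getLast? = some (b, 1) → ∃ s, a ≤ s ∧ s ≤ b ∧ l = path2 a s b := by
  intro l
  induction l with
  | nil => intro a b _ h; simp at h
  | cons x t ih =>
    intro a b hc hh hl
    simp only [List.head?_cons, Option.some.injEq] at hh
    subst hh
    cases t with
    | nil =>
      simp only [List.getLast?_singleton, Option.some.injEq, Prod.mk.injEq] at hl
      omega
    | cons y t' =>
      rw [List.Chain', List.isChain_cons_cons] at hc
      have hl' : (y :: t').getLast? = some (b, 1) := by rwa [List.getLast?_cons_cons] at hl
      rcases hc.1 with ⟨hy1, hy2⟩ | ⟨hy1, hy2⟩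
      · -- y = (a+1, 2), recurse
        have hy : y = (a + 1, 2) := by rw [Prod.ext_iff]; exact ⟨hy1, hy2⟩
        subst hy
        obtain ⟨s, hs1, hs2, hseg⟩ := ih hc.2 rfl hl'
        refine ⟨s, by omega, hs2, ?_⟩
        rw [hseg]
        simp only [path2]
        have : seg 2 a s = (a, 2) :: seg 2 (a+1) s := by
          simp only [seg]
          have h1 : (s - a + 1).toNat = (s - (a+1) + 1).toNat + 1 := by omega
          rw [h1]
          rfl
        rw [this]
        rfl
      · -- y = (a, 1): rest is level-1 path
        have hy : y = (a, 1) := by rw [Prod.ext_iff]; constructor <;> omega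
        subst hy
        obtain ⟨hab, hseg⟩ := char1 hc.2 rfl hl'
        refine ⟨a, le_refl _, hab, ?_⟩
        rw [hseg]
        simp only [path2]
        have : seg 2 a a = [(a, 2)] := by
          simp only [seg]
          have : (a - a + 1).toNat = 1 := by omega
          rw [this]
          rfl
        rw [this]
        rfl
theorem clo_pos {r : ℤ} {f : ℤ → ℝ} (hf : ∀ y, r ≤ y → 0 < f y) (y : ℤ) : 0 < clo r f y := by
  unfold clo
  split
  · norm_num
  · exact hf y (by omega)

theorem clo_of_lt {r : ℤ} {f : ℤ → ℝ} {y : ℤ} (h : y < r) : clo r f y = 1 := if_pos h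

theorem clo_of_le {r : ℤ} {f : ℤ → ℝ} {y : ℤ} (h : r ≤ y) : clo r f y = f y := if_neg (by omega)

theorem pitSum_neg {r : ℤ} {f g : ℤ → ℝ} {x : ℤ} (h : x < r) : pitSum r f g x = 0 := by
  unfold pitSum
  rw [Finset.Icc_eq_empty (by omega), Finset.sum_empty]

theorem pitSum_pos {r : ℤ} {f g : ℤ → ℝ} (hf : ∀ y, r ≤ y → 0 < f y)
    (hg : ∀ y, r ≤ y → 0 < g y) {x : ℤ} (hx : r ≤ x) : 0 < pitSum r f g x := by
  unfold pitSum
  apply Finset.sum_pos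
  · intro m hm
    rw [Finset.mem_Icc] at hm
    exact div_pos (hg m hm.1) (clo_pos hf _)
  · exact ⟨r, Finset.mem_Icc.2 ⟨le_refl r, hx⟩⟩

theorem sum_block {r a b : ℤ} (f g : ℤ → ℝ) (ha : r ≤ a) (hab : a ≤ b + 1) :
    ∑ m ∈ Finset.Icc a b, g m / clo r f (m - 1) = pitSum r f g b - pitSum r f g (a - 1) := by
  have hsplit : Finset.Icc r (a-1) ∪ Finset.Icc a b = Finset.Icc r b := by
    ext x
    simp only [Finset.mem_union, Finset.mem_Icc]
    omega
  have hdisj : Disjoint (Finset.Icc r (a-1)) (Finset.Icc a b) := by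
    rw [Finset.disjoint_left]
    intro x hx hx'
    rw [Finset.mem_Icc] at hx hx'
    omega
  have := Finset.sum_union (f := fun m => g m / clo r f (m - 1)) hdisj
  rw [hsplit] at this
  unfold pitSum
  rw [this]
  ring

theorem telescope (F : ℤ → ℝ) : ∀ (n : ℕ) (a b : ℤ), b + 1 = a + n →
    ∑ x ∈ Finset.Icc a b, (F (x-1) - F x) = F (a-1) - F b := by
  intro n
  induction n with
  | zero =>
    intro a b h
    have : b = a - 1 := by omega
    subst this
    rw [Finset.Icc_eq_empty (by omega), Finset.sum_empty]
    ring
  | succ n ih =>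
    intro a b h
    have hab : a ≤ b := by omega
    have hins : Finset.Icc a b = insert b (Finset.Icc a (b-1)) := by
      ext x
      simp only [Finset.mem_insert, Finset.mem_Icc]
      omega
    rw [hins, Finset.sum_insert (by simp only [Finset.mem_Icc]; omega),
      ih a (b-1) (by omega)]
    ring

/-! ### Box bounds -/

def Abd {k : ℕ} (u v : Fin k → ℤ) (i : Fin k) : ℤ :=
  if (i : ℕ) = 0 then u i
  else max (u i) (v ⟨(i:ℕ) - 1, lt_of_le_of_lt (Nat.sub_le _ _) i.isLt⟩ + 1)

def Bbd {k : ℕ} (u v : Fin k → ℤ) (i : Fin k) : ℤ :=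
  if h : (i:ℕ) + 1 < k then min (v i) (u ⟨(i:ℕ) + 1, h⟩ - 1) else v i

theorem u_le_Abd {k : ℕ} (u v : Fin k → ℤ) (i : Fin k) : u i ≤ Abd u v i := by
  unfold Abd; split
  · exact le_refl _
  · exact le_max_left _ _

theorem Bbd_le_v {k : ℕ} (u v : Fin k → ℤ) (i : Fin k) : Bbd u v i ≤ v i := by
  unfold Bbd; split
  · exact min_le_left _ _
  · exact le_refl _

theorem mem_box_iff {k : ℕ} {u v : Fin k → ℤ} (hu : StrictMono u) (hv : StrictMono v)
    (s : Fin k → ℤ) :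
    (∀ i, Abd u v i ≤ s i ∧ s i ≤ Bbd u v i) ↔
      ((∀ i, u i ≤ s i ∧ s i ≤ v i) ∧ ∀ i j : Fin k, i < j → s i < u j ∧ v i < s j) := by
  constructor
  · intro h
    refine ⟨fun i => ⟨le_trans (u_le_Abd u v i) (h i).1, le_trans (h i).2 (Bbd_le_v u v i)⟩, ?_⟩
    intro i j hij
    have hij' : (i:ℕ) < (j:ℕ) := hij
    constructor
    · have h1 : (i:ℕ) + 1 < k := by have := j.isLt; omega
      have h2 : Bbd u v i ≤ u ⟨(i:ℕ)+1, h1⟩ - 1 := by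
        unfold Bbd; rw [dif_pos h1]; exact min_le_right _ _
      have h3 : u ⟨(i:ℕ)+1, h1⟩ ≤ u j := hu.monotone (by rw [Fin.le_def]; simp; omega)
      have := (h i).2
      omega
    · have h1 : ¬ ((j:ℕ) = 0) := by omega
      have h2 : v ⟨(j:ℕ)-1, lt_of_le_of_lt (Nat.sub_le _ _) j.isLt⟩ + 1 ≤ Abd u v j := by
        unfold Abd; rw [if_neg h1]; exact le_max_right _ _
      have h3 : v i ≤ v ⟨(j:ℕ)-1, lt_of_le_of_lt (Nat.sub_le _ _) j.isLt⟩ :=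
        hv.monotone (by rw [Fin.le_def]; simp; omega)
      have := (h j).1
      omega
  · rintro ⟨h1, h2⟩ i
    constructor
    · unfold Abd; split
      · exact (h1 i).1
      · rename_i hi0
        have hlt : (⟨(i:ℕ)-1, lt_of_le_of_lt (Nat.sub_le _ _) i.isLt⟩ : Fin k) < i := by
          rw [Fin.lt_def]; simp; omega
        have := (h2 _ i hlt).2
        have := (h1 i).1
        omega
    · unfold Bbd; split
      · rename_i hik
        have hlt : i < (⟨(i:ℕ)+1, hik⟩ : Fin k) := by rw [Fin.lt_def]; simp
        have := (h2 i _ hlt).1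
        have := (h1 i).2
        omega
      · exact (h1 i).2

theorem Multipath.ext' {rl : ℤ → ℤ} {k : ℕ} {U V : Fin k → ℤ × ℤ}
    {M N : Multipath rl U V} (h : M.pts = N.pts) : M = N := by
  cases M; cases N; cases h; rfl

/-! ### LHS bijection -/

theorem lhs_char {r : ℤ} {k : ℕ} {u v : Fin k → ℤ} (hu : StrictMono u) (hv : StrictMono v)
    (M : Multipath (fun _ => r) (fun i => (u i, 2)) (fun i => (v i, 1))) :
    ∃ s : Fin k → ℤ, (∀ i, M.pts i = path2 (u i) (s i) (v i)) ∧
      (∀ i, u i ≤ s i ∧ s i ≤ v i) ∧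
      ∀ i, Abd u v i ≤ s i ∧ s i ≤ Bbd u v i := by
  have hchar := fun i => char2 (M.chain i) (M.head i) (M.last i)
  choose s h1 h2 h3 using hchar
  refine ⟨s, h3, fun i => ⟨h1 i, h2 i⟩, ?_⟩
  rw [mem_box_iff hu hv]
  refine ⟨fun i => ⟨h1 i, h2 i⟩, ?_⟩
  intro i j hij
  constructor
  · by_contra hcon
    push_neg at hcon
    have p1 : ((u j, 2) : ℤ × ℤ) ∈ M.pts i := by
      rw [h3 i]; exact mem_path2.2 (Or.inl ⟨rfl, le_of_lt (hu hij), hcon⟩)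
    have p2 : ((u j, 2) : ℤ × ℤ) ∈ M.pts j := by
      rw [h3 j]; exact mem_path2.2 (Or.inl ⟨rfl, le_refl _, h1 j⟩)
    exact M.disj i j (ne_of_lt hij) _ p1 p2
  · by_contra hcon
    push_neg at hcon
    have p1 : ((v i, 1) : ℤ × ℤ) ∈ M.pts j := by
      rw [h3 j]; exact mem_path2.2 (Or.inr ⟨rfl, hcon, le_of_lt (hv hij)⟩)
    have p2 : ((v i, 1) : ℤ × ℤ) ∈ M.pts i := by
      rw [h3 i]; exact mem_path2.2 (Or.inr ⟨rfl, h2 i, le_refl _⟩)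
    exact M.disj i j (ne_of_lt hij) _ p2 p1

def lhsBuild (r : ℤ) {k : ℕ} (u v : Fin k → ℤ) (hur : ∀ i, r ≤ u i)
    (hu : StrictMono u) (hv : StrictMono v) (s : Fin k → ℤ)
    (hs : ∀ i, Abd u v i ≤ s i ∧ s i ≤ Bbd u v i) :
    Multipath (fun _ => r) (fun i => (u i, 2)) (fun i => (v i, 1)) where
  pts i := path2 (u i) (s i) (v i)
  ne i := path2_ne (le_trans (u_le_Abd u v i) (hs i).1)
  chain i := chain'_path2 (le_trans (u_le_Abd u v i) (hs i).1)
    (le_trans (hs i).2 (Bbd_le_v u v i))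
  head i := head?_path2 (le_trans (u_le_Abd u v i) (hs i).1)
  last i := getLast?_path2 (le_trans (hs i).2 (Bbd_le_v u v i))
  dom i p hp := by
    rcases mem_path2.1 hp with ⟨_, hp1, _⟩ | ⟨_, hp1, _⟩
    · exact le_trans (hur i) hp1
    · have := (hs i).1
      have := u_le_Abd u v i
      have := hur i
      omega
  disj i j hij p hpi hpj := by
    obtain ⟨hbox, hpair⟩ := (mem_box_iff hu hv s).1 hs
    rcases hij.lt_or_gt with hlt | hlt
    · rcases mem_path2.1 hpi with ⟨hl, hp1, hp2⟩ | ⟨hl, hp1, hp2⟩ <;>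
        rcases mem_path2.1 hpj with ⟨hl', hq1, hq2⟩ | ⟨hl', hq1, hq2⟩
      · have := (hpair i j hlt).1; omega
      · omega
      · omega
      · have := (hpair i j hlt).2
        have := (hbox j).2
        omega
    · rcases mem_path2.1 hpi with ⟨hl, hp1, hp2⟩ | ⟨hl, hp1, hp2⟩ <;>
        rcases mem_path2.1 hpj with ⟨hl', hq1, hq2⟩ | ⟨hl', hq1, hq2⟩
      · have := (hpair j i hlt).1; omega
      · omega
      · omega
      · have := (hpair j i hlt).2
        have := (hbox i).2
        omega

theorem lhs_eval (r : ℤ) {k : ℕ} (u v : Fin k → ℤ) (hur : ∀ i, r ≤ u i)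
    (hu : StrictMono u) (hv : StrictMono v) (D' : ℤ → ℤ → ℝ) :
    partFn (fun _ => r) D' (fun i => (u i, 2)) (fun i => (v i, 1))
      = ∑ s ∈ Fintype.piFinset (fun i => Finset.Icc (Abd u v i) (Bbd u v i)),
          ∏ i, pathWeight (fun _ => r) D' (path2 (u i) (s i) (v i)) := by
  classical
  set F := Fintype.piFinset (fun i => Finset.Icc (Abd u v i) (Bbd u v i)) with hF
  have hmem : ∀ s : Fin k → ℤ, s ∈ F ↔ ∀ i, Abd u v i ≤ s i ∧ s i ≤ Bbd u v i := by
    intro s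
    rw [hF, Fintype.mem_piFinset]
    simp only [Finset.mem_Icc]
  let φ : {s : Fin k → ℤ // s ∈ F} →
      Multipath (fun _ => r) (fun i => (u i, 2)) (fun i => (v i, 1)) :=
    fun s => lhsBuild r u v hur hu hv s.1 ((hmem s.1).1 s.2)
  have hinj : Function.Injective φ := by
    intro s t hst
    have hpts := congrArg Multipath.pts hst
    apply Subtype.ext
    funext i
    have h1 := congrFun hpts i
    simp only [φ, lhsBuild] at h1
    have hbs := (hmem s.1).1 s.2 i
    have hbt := (hmem t.1).1 t.2 i
    exact path2_inj (le_trans (u_le_Abd u v i) hbs.1) (le_trans hbs.2 (Bbd_le_v u v i))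
      (le_trans (u_le_Abd u v i) hbt.1) (le_trans hbt.2 (Bbd_le_v u v i)) h1
  have hsurj : Function.Surjective φ := by
    intro M
    obtain ⟨s, hpts, _, hbox⟩ := lhs_char hu hv M
    refine ⟨⟨s, (hmem s).2 hbox⟩, ?_⟩
    apply Multipath.ext'
    funext i
    simp only [φ, lhsBuild]
    exact (hpts i).symm
  rw [partFn, ← Equiv.tsum_eq (Equiv.ofBijective φ ⟨hinj, hsurj⟩)
    (fun π => ∏ i, pathWeight (fun _ => r) D' (π.pts i))]
  rw [← Finset.tsum_subtype F
    (fun s => ∏ i, pathWeight (fun _ => r) D' (path2 (u i) (s i) (v i)))]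
  rfl

/-! ### RHS bijection -/

def A2 (r : ℤ) {k : ℕ} (u v : Fin k → ℤ) (i : Fin k) : ℤ :=
  if u i = r then r else Abd u v i

def B2 (r : ℤ) {k : ℕ} (u v : Fin k → ℤ) (i : Fin k) : ℤ :=
  if u i = r then r else Bbd u v i

def rpath (r : ℤ) {k : ℕ} (u v : Fin k → ℤ) (i : Fin k) (t : ℤ) : List (ℤ × ℤ) :=
  if u i = r then seg 1 (u i) (v i) else path2 (u i) t (v i)

section RHS

variable {r : ℤ} {k : ℕ} {u v : Fin k → ℤ}

theorem min_deg {i : Fin k} (h : u i = r) : min 2 (u i - r + 1) = 1 := by omega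

theorem min_nondeg {i : Fin k} (hur : ∀ i, r ≤ u i) (h : u i ≠ r) :
    min 2 (u i - r + 1) = 2 := by
  have := hur i; omega

theorem u_nondeg (hur : ∀ i, r ≤ u i) (hu : StrictMono u) {i j : Fin k} (hij : i < j) :
    u j ≠ r := by
  have := hur i
  have := hu hij
  omega

theorem box2_pairwise (hur : ∀ i, r ≤ u i) (hu : StrictMono u) (hv : StrictMono v)
    (t : Fin k → ℤ) (ht : ∀ i, A2 r u v i ≤ t i ∧ t i ≤ B2 r u v i)
    {i j : Fin k} (hij : i < j) : t i < u j ∧ v i < t j := by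
  have hjn : u j ≠ r := u_nondeg hur hu hij
  constructor
  · by_cases hi : u i = r
    · have h1 : t i ≤ r := by have := (ht i).2; unfold B2 at this; rwa [if_pos hi] at this
      have := hur i
      have := hu hij
      omega
    · have h1 : t i ≤ Bbd u v i := by
        have := (ht i).2; unfold B2 at this; rwa [if_neg hi] at this
      have h2 : (i:ℕ) + 1 < k := by have := j.isLt; have : (i:ℕ) < (j:ℕ) := hij; omega
      have h3 : Bbd u v i ≤ u ⟨(i:ℕ)+1, h2⟩ - 1 := by
        unfold Bbd; rw [dif_pos h2]; exact min_le_right _ _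
      have h4 : u ⟨(i:ℕ)+1, h2⟩ ≤ u j := hu.monotone (by rw [Fin.le_def]; simp; exact hij)
      omega
  · have h1 : Abd u v j ≤ t j := by
      have := (ht j).1; unfold A2 at this; rwa [if_neg hjn] at this
    have hj0 : ¬ ((j:ℕ) = 0) := by
      have : (i:ℕ) < (j:ℕ) := hij; omega
    have h2 : v ⟨(j:ℕ)-1, lt_of_le_of_lt (Nat.sub_le _ _) j.isLt⟩ + 1 ≤ Abd u v j := by
      unfold Abd; rw [if_neg hj0]; exact le_max_right _ _
    have h3 : v i ≤ v ⟨(j:ℕ)-1, lt_of_le_of_lt (Nat.sub_le _ _) j.isLt⟩ :=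
      hv.monotone (by rw [Fin.le_def]; simp; have : (i:ℕ) < (j:ℕ) := hij; omega)
    omega

theorem box2_bounds (hur : ∀ i, r ≤ u i) (t : Fin k → ℤ)
    (ht : ∀ i, A2 r u v i ≤ t i ∧ t i ≤ B2 r u v i) {i : Fin k} (hi : u i ≠ r) :
    u i ≤ t i ∧ t i ≤ v i := by
  have h1 := (ht i).1
  have h2 := (ht i).2
  unfold A2 at h1
  unfold B2 at h2
  rw [if_neg hi] at h1 h2
  exact ⟨le_trans (u_le_Abd u v i) h1, le_trans h2 (Bbd_le_v u v i)⟩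

theorem rhs_char (hur : ∀ i, r ≤ u i) (hu : StrictMono u) (hv : StrictMono v)
    (M : Multipath (fun m => if m = 2 then r + 1 else r)
      (fun i => (u i, min 2 (u i - r + 1))) (fun i => (v i, 1))) :
    ∃ t : Fin k → ℤ, (∀ i, M.pts i = rpath r u v i (t i)) ∧
      ∀ i, A2 r u v i ≤ t i ∧ t i ≤ B2 r u v i := by
  have hchar : ∀ i, ∃ t : ℤ, M.pts i = rpath r u v i t ∧
      (u i = r → t = r) ∧ (u i ≠ r → u i ≤ t ∧ t ≤ v i) := by
    intro i
    by_cases h : u i = r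
    · have hhead : (M.pts i).head? = some (u i, 1) := by
        have := M.head i; rwa [min_deg h] at this
      obtain ⟨hab, hseg⟩ := char1 (M.chain i) hhead (M.last i)
      refine ⟨r, ?_, fun _ => rfl, fun h' => absurd h h'⟩
      rw [rpath, if_pos h]; exact hseg
    · have hhead : (M.pts i).head? = some (u i, 2) := by
        have := M.head i; rwa [min_nondeg hur h] at this
      obtain ⟨t, h1, h2, h3⟩ := char2 (M.chain i) hhead (M.last i)
      refine ⟨t, ?_, fun h' => absurd h' h, fun _ => ⟨h1, h2⟩⟩
      rw [rpath, if_neg h]; exact h3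
  choose t h1 h2 h3 using hchar
  refine ⟨t, h1, ?_⟩
  have hpair : ∀ i j : Fin k, i < j → t i < u j ∧ v i < t j := by
    intro i j hij
    have hjn : u j ≠ r := u_nondeg hur hu hij
    constructor
    · by_cases hi : u i = r
      · have := h2 i hi
        have := hur i
        have := hu hij
        omega
      · by_contra hcon
        push_neg at hcon
        have p1 : ((u j, 2) : ℤ × ℤ) ∈ M.pts i := by
          rw [h1 i, rpath, if_neg hi]
          exact mem_path2.2 (Or.inl ⟨rfl, le_of_lt (hu hij), hcon⟩)
        have p2 : ((u j, 2) : ℤ × ℤ) ∈ M.pts j := by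
          rw [h1 j, rpath, if_neg hjn]
          exact mem_path2.2 (Or.inl ⟨rfl, le_refl _, (h3 j hjn).1⟩)
        exact M.disj i j (ne_of_lt hij) _ p1 p2
    · by_contra hcon
      push_neg at hcon
      have p1 : ((v i, 1) : ℤ × ℤ) ∈ M.pts j := by
        rw [h1 j, rpath, if_neg hjn]
        exact mem_path2.2 (Or.inr ⟨rfl, hcon, le_of_lt (hv hij)⟩)
      have p2 : ((v i, 1) : ℤ × ℤ) ∈ M.pts i := by
        by_cases hi : u i = r
        · rw [h1 i, rpath, if_pos hi]
          have hhead : (M.pts i).head? = some (u i, 1) := by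
            have := M.head i; rwa [min_deg hi] at this
          obtain ⟨hab, _⟩ := char1 (M.chain i) hhead (M.last i)
          rw [mem_seg]
          exact ⟨rfl, hab, le_refl _⟩
        · rw [h1 i, rpath, if_neg hi]
          exact mem_path2.2 (Or.inr ⟨rfl, (h3 i hi).2, le_refl _⟩)
      exact M.disj i j (ne_of_lt hij) _ p2 p1
  intro i
  by_cases hi : u i = r
  · unfold A2 B2
    rw [if_pos hi, if_pos hi]
    have := h2 i hi
    omega
  · unfold A2 B2
    rw [if_neg hi, if_neg hi]
    constructor
    · unfold Abd
      split
      · exact (h3 i hi).1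
      · rename_i hi0
        have hlt : (⟨(i:ℕ)-1, lt_of_le_of_lt (Nat.sub_le _ _) i.isLt⟩ : Fin k) < i := by
          rw [Fin.lt_def]; simp; omega
        have := (hpair _ i hlt).2
        have := (h3 i hi).1
        omega
    · unfold Bbd
      split
      · rename_i hik
        have hlt : i < (⟨(i:ℕ)+1, hik⟩ : Fin k) := by rw [Fin.lt_def]; simp
        have := (hpair i _ hlt).1
        have := (h3 i hi).2
        omega
      · exact (h3 i hi).2

def rhsBuild (r : ℤ) {k : ℕ} (u v : Fin k → ℤ) (hur : ∀ i, r ≤ u i)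
    (huv : ∀ i, u i ≤ v i) (hu : StrictMono u) (hv : StrictMono v) (t : Fin k → ℤ)
    (ht : ∀ i, A2 r u v i ≤ t i ∧ t i ≤ B2 r u v i) :
    Multipath (fun m => if m = 2 then r + 1 else r)
      (fun i => (u i, min 2 (u i - r + 1))) (fun i => (v i, 1)) where
  pts i := rpath r u v i (t i)
  ne i := by
    simp only [rpath]; split
    · exact seg_ne (huv i)
    · exact path2_ne (box2_bounds hur t ht (by assumption)).1
  chain i := by
    simp only [rpath]; split
    · exact chain'_seg
    · have := box2_bounds hur t ht (by assumption)
      exact chain'_path2 this.1 this.2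
  head i := by
    simp only [rpath]; split
    · rename_i h
      rw [head?_seg (huv i), min_deg h]
    · rename_i h
      rw [head?_path2 (box2_bounds hur t ht h).1, min_nondeg hur h]
  last i := by
    simp only [rpath]; split
    · exact getLast?_seg (huv i)
    · exact getLast?_path2 (box2_bounds hur t ht (by assumption)).2
  dom i p hp := by
    simp only [rpath] at hp
    split at hp
    · rename_i h
      rw [mem_seg] at hp
      obtain ⟨hp2, hp3, _⟩ := hp
      rw [hp2, if_neg (by norm_num)]
      have := hur i
      omega
    · rename_i h
      have hb := box2_bounds hur t ht h
      have := hur i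
      rcases mem_path2.1 hp with ⟨hp2, hp3, _⟩ | ⟨hp2, hp3, _⟩ <;> rw [hp2] <;> simp <;> omega
  disj i j hij p hpi hpj := by
    have aux : ∀ i' j' : Fin k, i' < j' → p ∈ rpath r u v i' (t i') →
        p ∈ rpath r u v j' (t j') → False := by
      intro i' j' hlt hp1 hp2
      have hjn : u j' ≠ r := u_nondeg hur hu hlt
      have hpw := box2_pairwise hur hu hv t ht hlt
      simp only [rpath, if_neg hjn, mem_path2] at hp2
      simp only [rpath] at hp1
      split at hp1
      · rw [mem_seg] at hp1
        rcases hp2 with ⟨hq1, hq2, _⟩ | ⟨hq1, hq2, _⟩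
        · omega
        · obtain ⟨hp1a, _, hp1c⟩ := hp1
          omega
      · rename_i hin
        have hbi := box2_bounds hur t ht hin
        rcases mem_path2.1 hp1 with ⟨hq1, hq2, hq3⟩ | ⟨hq1, hq2, hq3⟩ <;>
          rcases hp2 with ⟨hw1, hw2, hw3⟩ | ⟨hw1, hw2, hw3⟩ <;> omega
    rcases hij.lt_or_gt with hlt | hlt
    · exact aux i j hlt hpi hpj
    · exact aux j i hlt hpj hpi

theorem rhs_eval (r : ℤ) {k : ℕ} (u v : Fin k → ℤ) (hur : ∀ i, r ≤ u i)
    (huv : ∀ i, u i ≤ v i) (hu : StrictMono u) (hv : StrictMono v) (D' : ℤ → ℤ → ℝ) :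
    partFn (fun m => if m = 2 then r + 1 else r) D'
        (fun i => (u i, min 2 (u i - r + 1))) (fun i => (v i, 1))
      = ∑ t ∈ Fintype.piFinset (fun i => Finset.Icc (A2 r u v i) (B2 r u v i)),
          ∏ i, pathWeight (fun m => if m = 2 then r + 1 else r) D' (rpath r u v i (t i)) := by
  classical
  set F := Fintype.piFinset (fun i => Finset.Icc (A2 r u v i) (B2 r u v i)) with hF
  have hmem : ∀ t : Fin k → ℤ, t ∈ F ↔ ∀ i, A2 r u v i ≤ t i ∧ t i ≤ B2 r u v i := by
    intro t
    rw [hF, Fintype.mem_piFinset]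
    simp only [Finset.mem_Icc]
  let φ : {t : Fin k → ℤ // t ∈ F} →
      Multipath (fun m => if m = 2 then r + 1 else r)
        (fun i => (u i, min 2 (u i - r + 1))) (fun i => (v i, 1)) :=
    fun t => rhsBuild r u v hur huv hu hv t.1 ((hmem t.1).1 t.2)
  have hinj : Function.Injective φ := by
    intro s t hst
    have hpts := congrArg Multipath.pts hst
    apply Subtype.ext
    funext i
    have h1 := congrFun hpts i
    simp only [φ, rhsBuild] at h1
    by_cases hi : u i = r
    · have hbs := (hmem s.1).1 s.2 i
      have hbt := (hmem t.1).1 t.2 i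
      unfold A2 B2 at hbs hbt
      rw [if_pos hi] at hbs hbt
      omega
    · rw [rpath, rpath, if_neg hi, if_neg hi] at h1
      have hbs := box2_bounds hur s.1 ((hmem s.1).1 s.2) hi
      have hbt := box2_bounds hur t.1 ((hmem t.1).1 t.2) hi
      exact path2_inj hbs.1 hbs.2 hbt.1 hbt.2 h1
  have hsurj : Function.Surjective φ := by
    intro M
    obtain ⟨t, hpts, hbox⟩ := rhs_char hur hu hv M
    refine ⟨⟨t, (hmem t).2 hbox⟩, ?_⟩
    apply Multipath.ext'
    funext i
    simp only [φ, rhsBuild]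
    exact (hpts i).symm
  rw [partFn, ← Equiv.tsum_eq (Equiv.ofBijective φ ⟨hinj, hsurj⟩)
    (fun π => ∏ i, pathWeight (fun m => if m = 2 then r + 1 else r) D' (π.pts i))]
  rw [← Finset.tsum_subtype F
    (fun t => ∏ i, pathWeight (fun m => if m = 2 then r + 1 else r) D' (rpath r u v i (t i)))]
  rfl

end RHS

/-! ### Per-index sum evaluations -/

theorem lhs_term (r : ℤ) {k : ℕ} (u v : Fin k → ℤ) (D : ℤ → ℤ → ℝ)
    (hf : ∀ x, r ≤ x → 0 < D 1 x) (hg : ∀ x, r ≤ x → 0 < D 2 x)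
    (hur : ∀ i, r ≤ u i) (i : Fin k) (hAB : Abd u v i ≤ Bbd u v i)
    (hBv : Bbd u v i ≤ v i) :
    ∑ x ∈ Finset.Icc (Abd u v i) (Bbd u v i),
        pathWeight (fun _ => r) D (path2 (u i) x (v i))
      = (D 1 (v i) / clo r (D 2) (u i - 1)) *
          (pitSum r (D 1) (D 2) (Bbd u v i) - pitSum r (D 1) (D 2) (Abd u v i - 1)) := by
  have hA : r ≤ Abd u v i := le_trans (hur i) (u_le_Abd u v i)
  have e1 : ∀ x ∈ Finset.Icc (Abd u v i) (Bbd u v i),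
      pathWeight (fun _ => r) D (path2 (u i) x (v i))
        = (D 1 (v i) / clo r (D 2) (u i - 1)) * (D 2 x / clo r (D 1) (x - 1)) := by
    intro x hx
    rw [Finset.mem_Icc] at hx
    rw [weight_path2 (fun _ => r) D (fun y hy => ne_of_gt (hg y hy))
      (fun y hy => ne_of_gt (hf y hy)) (hur i) (by show r ≤ x; omega)
      (le_trans (u_le_Abd u v i) hx.1) (by omega)]
    ring
  rw [Finset.sum_congr rfl e1, ← Finset.mul_sum, sum_block (D 1) (D 2) hA (by omega)]

theorem rhs_term_deg (r : ℤ) {k : ℕ} (u v : Fin k → ℤ) (D : ℤ → ℤ → ℝ)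
    (hf : ∀ x, r ≤ x → 0 < D 1 x) (hg : ∀ x, r ≤ x → 0 < D 2 x)
    (i : Fin k) (hi : u i = r) (huvi : u i ≤ v i) :
    ∑ x ∈ Finset.Icc (A2 r u v i) (B2 r u v i),
        pathWeight (fun m => if m = 2 then r + 1 else r) (Tro r 1 D) (rpath r u v i x)
      = D 1 (v i) * pitSum r (D 1) (D 2) (v i) := by
  have hT1 : Tro r 1 D 1 = odot r (D 2) (D 1) := by simp [Tro]
  have hA : A2 r u v i = r := by unfold A2; rw [if_pos hi]
  have hB : B2 r u v i = r := by unfold B2; rw [if_pos hi]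
  rw [hA, hB, Finset.Icc_self, Finset.sum_singleton]
  unfold rpath
  rw [if_pos hi]
  have hpos : ∀ x, (fun m => if m = 2 then r + 1 else r) 1 ≤ x → Tro r 1 D 1 x ≠ 0 := by
    intro x hx
    simp only [if_neg (by norm_num : ¬ (1:ℤ) = 2)] at hx
    rw [hT1]
    exact ne_of_gt (mul_pos (hf x hx) (pitSum_pos hf hg hx))
  rw [weight_seg _ _ hpos (by show (if (1:ℤ) = 2 then r+1 else r) ≤ u i; rw [if_neg (by norm_num)]; omega) huvi]
  simp only [if_neg (by norm_num : ¬ (1:ℤ) = 2)]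
  rw [clo_of_lt (by omega : u i - 1 < r), hT1]
  simp [odot]

theorem rhs_term_nondeg (r : ℤ) {k : ℕ} (u v : Fin k → ℤ) (D : ℤ → ℤ → ℝ)
    (hf : ∀ x, r ≤ x → 0 < D 1 x) (hg : ∀ x, r ≤ x → 0 < D 2 x)
    (hur : ∀ i, r ≤ u i) (i : Fin k) (hi : u i ≠ r)
    (hA1 : r + 1 ≤ Abd u v i) (hAB : Abd u v i ≤ Bbd u v i) (hBv : Bbd u v i ≤ v i) :
    ∑ x ∈ Finset.Icc (A2 r u v i) (B2 r u v i),
        pathWeight (fun m => if m = 2 then r + 1 else r) (Tro r 1 D) (rpath r u v i x)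
      = (D 1 (v i) * pitSum r (D 1) (D 2) (v i) / clo (r+1) (Tro r 1 D 2) (u i - 1)) *
          ((pitSum r (D 1) (D 2) (Abd u v i - 1))⁻¹ - (pitSum r (D 1) (D 2) (Bbd u v i))⁻¹) := by
  set S := pitSum r (D 1) (D 2) with hSdef
  have hT1 : Tro r 1 D 1 = odot r (D 2) (D 1) := by simp [Tro]
  have hT2 : Tro r 1 D 2 = otimes r (D 1) (D 2) := by
    unfold Tro; norm_num
  have hA : A2 r u v i = Abd u v i := by unfold A2; rw [if_neg hi]
  have hB : B2 r u v i = Bbd u v i := by unfold B2; rw [if_neg hi]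
  have hSpos : ∀ x, r ≤ x → 0 < S x := fun x hx => pitSum_pos hf hg hx
  have hui : r + 1 ≤ u i := by have := hur i; omega
  have hvir : r ≤ v i := by have := le_trans hA1 (le_trans hAB hBv); omega
  have hpos1 : ∀ x, (fun m => if m = 2 then r + 1 else r) 1 ≤ x → Tro r 1 D 1 x ≠ 0 := by
    intro x hx
    simp only [if_neg (by norm_num : ¬ (1:ℤ) = 2)] at hx
    rw [hT1]
    exact ne_of_gt (mul_pos (hf x hx) (hSpos x hx))
  have hpos2 : ∀ x, (fun m => if m = 2 then r + 1 else r) 2 ≤ x → Tro r 1 D 2 x ≠ 0 := by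
    intro x hx
    simp only [if_pos rfl] at hx
    rw [hT2]
    exact ne_of_gt (mul_pos (hg x (by omega)) (inv_pos.2 (hSpos x (by omega))))
  rw [hA, hB]
  have e1 : ∀ x ∈ Finset.Icc (Abd u v i) (Bbd u v i),
      pathWeight (fun m => if m = 2 then r + 1 else r) (Tro r 1 D) (rpath r u v i x)
        = (D 1 (v i) * S (v i) / clo (r+1) (Tro r 1 D 2) (u i - 1)) *
            ((S (x-1))⁻¹ - (S x)⁻¹) := by
    intro x hx
    rw [Finset.mem_Icc] at hx
    have hxr : r + 1 ≤ x := le_trans hA1 hx.1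
    unfold rpath
    rw [if_neg hi]
    rw [weight_path2 _ _ hpos2 hpos1 (by show r + 1 ≤ u i; omega)
      (by show r ≤ x; omega)
      (le_trans (u_le_Abd u v i) hx.1) (by omega)]
    simp only [if_pos rfl, if_neg (by norm_num : ¬ (1:ℤ) = 2)]
    rw [clo_of_le (by omega : r ≤ x - 1), hT1, hT2]
    simp only [odot, otimes]
    have hstep : S x - S (x - 1) = D 2 x / D 1 (x - 1) := by
      have hsb := sum_block (r := r) (a := x) (b := x) (D 1) (D 2) (by omega) (by omega)
      rw [Finset.Icc_self, Finset.sum_singleton, clo_of_le (by omega : r ≤ x - 1)] at hsb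
      rw [← hSdef] at hsb
      linarith
    have hfx : D 1 (x-1) ≠ 0 := ne_of_gt (hf _ (by omega))
    have hSx : S x ≠ 0 := ne_of_gt (hSpos x (by omega))
    have hSx1 : S (x-1) ≠ 0 := ne_of_gt (hSpos (x-1) (by omega))
    have h2x : D 2 x = (S x - S (x-1)) * D 1 (x-1) := by
      rw [hstep]
      field_simp
    have key : (S (x-1))⁻¹ - (S x)⁻¹ = D 2 x * (S x)⁻¹ / (D 1 (x - 1) * S (x - 1)) := by
      rw [h2x]
      field_simp
    rw [key]
    simp only [if_true]
    ring
  rw [Finset.sum_congr rfl e1, ← Finset.mul_sum]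
  have tele := telescope (fun y => (S y)⁻¹) (Bbd u v i + 1 - Abd u v i).toNat
    (Abd u v i) (Bbd u v i) (by omega)
  rw [tele]

/-! ### Product pairing -/

theorem prod_first_last (a b : ℕ → ℝ) : ∀ n : ℕ,
    ∏ j ∈ Finset.range (n+1), (a j * b j)
      = a 0 * b n * ∏ j ∈ Finset.range n, (a (j+1) * b j) := by
  intro n
  induction n with
  | zero => simp
  | succ n ih =>
    rw [Finset.prod_range_succ, ih, Finset.prod_range_succ]
    ring

theorem prod_pair_eq (a b c d : ℕ → ℝ) (n : ℕ) (h0 : a 0 = c 0) (hn : b n = d n)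
    (hp : ∀ j, j < n → a (j+1) * b j = c (j+1) * d j) :
    ∏ j ∈ Finset.range (n+1), (a j * b j) = ∏ j ∈ Finset.range (n+1), (c j * d j) := by
  rw [prod_first_last, prod_first_last, h0, hn]
  congr 1
  exact Finset.prod_congr rfl (fun j hj => hp j (Finset.mem_range.1 hj))

/-- **Step 2 of the proof of Theorem 2.6** (`n = 2`, general `k`): for an endpoint pair
`U = ((u_i,2))_i`, `V = ((v_i,1))_i` with all coordinates `≥ r`,
`D[U→V] = (𝒯_{r,1}D)[⇑_{r,1}U → V]` where `⇑_{r,1}U = ((u_i, 2∧(u_i−r+1)))_i`. -/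
theorem two_level_invariance (r : ℤ) (hr : 1 ≤ r) (D : ℤ → ℤ → ℝ)
    (hD : ∀ i : ℤ, i = 1 ∨ i = 2 → ∀ x : ℤ, r ≤ x → 0 < D i x)
    (k : ℕ) (hk : 1 ≤ k) (u v : Fin k → ℤ)
    (hur : ∀ i, r ≤ u i) (hvr : ∀ i, r ≤ v i)
    (hu : StrictMono u) (hv : StrictMono v)
    (hpair : Nonempty (Multipath (fun _ => r)
      (fun i => (u i, 2)) (fun i => (v i, 1)))) :
    partFn (fun _ => r) D (fun i => (u i, 2)) (fun i => (v i, 1))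
      = partFn (fun i => if i = 2 then r + 1 else r) (Tro r 1 D)
          (fun i => (u i, min 2 (u i - r + 1))) (fun i => (v i, 1)) := by
  classical
  have hf : ∀ x, r ≤ x → 0 < D 1 x := fun x hx => hD 1 (Or.inl rfl) x hx
  have hg : ∀ x, r ≤ x → 0 < D 2 x := fun x hx => hD 2 (Or.inr rfl) x hx
  set S := pitSum r (D 1) (D 2) with hSdef
  have hSpos : ∀ x, r ≤ x → 0 < S x := fun x hx => pitSum_pos hf hg hx
  obtain ⟨M⟩ := hpair
  obtain ⟨s0, hs0, hbox0u, hbox0⟩ := lhs_char hu hv M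
  have hAB : ∀ i, Abd u v i ≤ Bbd u v i := fun i => le_trans (hbox0 i).1 (hbox0 i).2
  have huv : ∀ i, u i ≤ v i := fun i => le_trans (hbox0u i).1 (hbox0u i).2
  have hkpos : 0 < k := hk
  -- the zero index
  have hi0 : ∀ i : Fin k, u i = r → (i:ℕ) = 0 := by
    intro i hi
    by_contra hcon
    have hlt : (⟨0, hkpos⟩ : Fin k) < i := by rw [Fin.lt_def]; simp; omega
    have := hu hlt
    have := hur ⟨0, hkpos⟩
    omega
  have hA1 : ∀ i : Fin k, u i ≠ r → r + 1 ≤ Abd u v i := by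
    intro i hi
    unfold Abd
    split
    · have := hur i; omega
    · rename_i h0
      have hvj := hvr ⟨(i:ℕ)-1, lt_of_le_of_lt (Nat.sub_le _ _) i.isLt⟩
      have := le_max_right (u i) (v ⟨(i:ℕ)-1, lt_of_le_of_lt (Nat.sub_le _ _) i.isLt⟩ + 1)
      omega
  have hrA : ∀ i : Fin k, r ≤ Abd u v i := fun i => le_trans (hur i) (u_le_Abd u v i)
  have hSB : ∀ i : Fin k, 0 < S (Bbd u v i) := fun i => hSpos _ (le_trans (hrA i) (hAB i))
  have hSv : ∀ i : Fin k, 0 < S (v i) := fun i => hSpos _ (hvr i)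
  -- correction factors
  set aa : Fin k → ℝ := fun i => if (i:ℕ) = 0 then 1 else S (Abd u v i - 1) with haadef
  set cc : Fin k → ℝ := fun i => if (i:ℕ) = 0 then 1 else S (u i - 1) with hccdef
  have haa : ∀ i, 0 < aa i := by
    intro i
    rw [haadef]
    simp only
    split
    · norm_num
    · rename_i h0
      apply hSpos
      have h2 : v ⟨(i:ℕ)-1, lt_of_le_of_lt (Nat.sub_le _ _) i.isLt⟩ + 1 ≤ Abd u v i := by
        unfold Abd; rw [if_neg h0]; exact le_max_right _ _
      have := hvr ⟨(i:ℕ)-1, lt_of_le_of_lt (Nat.sub_le _ _) i.isLt⟩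
      omega
  have hcc : ∀ i, 0 < cc i := by
    intro i
    rw [hccdef]
    simp only
    split
    · norm_num
    · rename_i h0
      apply hSpos
      have hlt : (⟨0, hkpos⟩ : Fin k) < i := by rw [Fin.lt_def]; simp; omega
      have := hu hlt
      have := hur ⟨0, hkpos⟩
      omega
  -- rewrite both partition functions as sums over boxes
  rw [lhs_eval r u v hur hu hv D, rhs_eval r u v hur huv hu hv (Tro r 1 D)]
  rw [← Finset.prod_univ_sum (fun i => Finset.Icc (Abd u v i) (Bbd u v i))
    (fun i x => pathWeight (fun _ => r) D (path2 (u i) x (v i)))]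
  rw [← Finset.prod_univ_sum (fun i => Finset.Icc (A2 r u v i) (B2 r u v i))
    (fun i x => pathWeight (fun m => if m = 2 then r + 1 else r) (Tro r 1 D) (rpath r u v i x))]
  -- termwise evaluation
  have hterm : ∀ i : Fin k,
      (∑ x ∈ Finset.Icc (A2 r u v i) (B2 r u v i),
        pathWeight (fun m => if m = 2 then r + 1 else r) (Tro r 1 D) (rpath r u v i x))
      = (∑ x ∈ Finset.Icc (Abd u v i) (Bbd u v i),
          pathWeight (fun _ => r) D (path2 (u i) x (v i)))
        * ((S (v i) * cc i) / (aa i * S (Bbd u v i))) := by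
    intro i
    rw [lhs_term r u v D hf hg hur i (hAB i) (Bbd_le_v u v i)]
    by_cases hi : u i = r
    · rw [rhs_term_deg r u v D hf hg i hi (huv i)]
      have h0 : (i:ℕ) = 0 := hi0 i hi
      have hAu : Abd u v i = u i := by unfold Abd; rw [if_pos h0]
      rw [haadef, hccdef]
      simp only [if_pos h0]
      rw [hAu, hi, clo_of_lt (by omega : r - 1 < r), pitSum_neg (by omega : r - 1 < r),
        ← hSdef]
      have := hSB i
      field_simp
      ring
    · rw [rhs_term_nondeg r u v D hf hg hur i hi (hA1 i hi) (hAB i) (Bbd_le_v u v i), ← hSdef]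
      have hui : r + 1 ≤ u i := by have := hur i; omega
      set H := clo (r+1) (Tro r 1 D 2) (u i - 1) with hHdef
      have hT2 : Tro r 1 D 2 = otimes r (D 1) (D 2) := by unfold Tro; norm_num
      have hH0 : 0 < H := by
        rw [hHdef]
        apply clo_pos
        intro y hy
        rw [hT2]
        exact mul_pos (hg y (by omega)) (inv_pos.2 (hSpos y (by omega)))
      have hHS : H * S (u i - 1) = clo r (D 2) (u i - 1) := by
        by_cases h2 : u i = r + 1
        · rw [hHdef, h2]
          rw [clo_of_lt (by omega : r + 1 - 1 < r + 1), clo_of_le (by omega : r ≤ r + 1 - 1)]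
          have : S (r + 1 - 1) = D 2 r := by
            rw [hSdef]
            show pitSum r (D 1) (D 2) (r + 1 - 1) = D 2 r
            unfold pitSum
            rw [show r + 1 - 1 = r by ring, Finset.Icc_self, Finset.sum_singleton,
              clo_of_lt (by omega : r - 1 < r)]
            simp
          rw [this]
          norm_num
        · rw [hHdef, clo_of_le (by omega : r + 1 ≤ u i - 1), clo_of_le (by omega : r ≤ u i - 1),
            hT2]
          show D 2 (u i - 1) * (S (u i - 1))⁻¹ * S (u i - 1) = D 2 (u i - 1)
          have := hSpos (u i - 1) (by omega)
          field_simp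
      have hSA : 0 < S (Abd u v i - 1) := by
        apply hSpos
        have := hA1 i hi
        omega
      have hSu : 0 < S (u i - 1) := hSpos _ (by omega)
      rw [← hHS]
      by_cases h0 : (i:ℕ) = 0
      · have hAu : Abd u v i = u i := by unfold Abd; rw [if_pos h0]
        rw [haadef, hccdef]
        simp only [if_pos h0]
        rw [hAu]
        have h1 := hSB i
        have h2 := hSv i
        field_simp
      · rw [haadef, hccdef]
        simp only [if_neg h0]
        have h1 := hSB i
        have h2 := hSv i
        field_simp
  rw [Finset.prod_congr rfl (fun i _ => hterm i), Finset.prod_mul_distrib]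
  -- it remains to show the product of corrections is 1
  have hkey : ∏ i : Fin k, (aa i * S (Bbd u v i)) = ∏ i : Fin k, (cc i * S (v i)) := by
    have hn : k = (k - 1) + 1 := by omega
    set FA : ℕ → ℝ := fun j => if h : j < k then aa ⟨j, h⟩ else 1 with hFA
    set FB : ℕ → ℝ := fun j => if h : j < k then S (Bbd u v ⟨j, h⟩) else 1 with hFB
    set FC : ℕ → ℝ := fun j => if h : j < k then cc ⟨j, h⟩ else 1 with hFC
    set FD : ℕ → ℝ := fun j => if h : j < k then S (v ⟨j, h⟩) else 1 with hFD
    have e1 : ∏ i : Fin k, (aa i * S (Bbd u v i)) = ∏ j ∈ Finset.range k, (FA j * FB j) := by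
      rw [← Fin.prod_univ_eq_prod_range (fun j => FA j * FB j) k]
      apply Finset.prod_congr rfl
      intro i _
      rw [hFA, hFB]
      simp only [dif_pos i.isLt, Fin.eta]
    have e2 : ∏ i : Fin k, (cc i * S (v i)) = ∏ j ∈ Finset.range k, (FC j * FD j) := by
      rw [← Fin.prod_univ_eq_prod_range (fun j => FC j * FD j) k]
      apply Finset.prod_congr rfl
      intro i _
      rw [hFC, hFD]
      simp only [dif_pos i.isLt, Fin.eta]
    rw [e1, e2, hn]
    apply prod_pair_eq
    · rw [hFA, hFC]
      simp only [dif_pos hkpos]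
      rw [haadef, hccdef]
      simp
    · rw [hFB, hFD]
      have hlt : k - 1 < k := by omega
      simp only [dif_pos hlt]
      congr 1
      unfold Bbd
      rw [dif_neg (by simp; omega)]
    · intro j hj
      have hj1 : j + 1 < k := by omega
      have hjk : j < k := by omega
      rw [hFA, hFB, hFC, hFD]
      simp only [dif_pos hj1, dif_pos hjk]
      rw [haadef, hccdef]
      simp only [if_neg (by simp : ¬ ((⟨j+1, hj1⟩ : Fin k) : ℕ) = 0)]
      have hAval : Abd u v ⟨j+1, hj1⟩ = max (u ⟨j+1, hj1⟩) (v ⟨j, hjk⟩ + 1) := by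
        unfold Abd
        rw [if_neg (by simp)]
        exact rfl
      have hBval : Bbd u v ⟨j, hjk⟩ = min (v ⟨j, hjk⟩) (u ⟨j+1, hj1⟩ - 1) := by
        unfold Bbd
        rw [dif_pos (by simpa using hj1)]
      rw [hAval, hBval]
      rcases le_total (u ⟨j+1, hj1⟩ - 1) (v ⟨j, hjk⟩) with hle | hle
      · rw [max_eq_right (by omega), min_eq_right hle,
          show v ⟨j, hjk⟩ + 1 - 1 = v ⟨j, hjk⟩ from by ring]
        ring
      · rw [max_eq_left (by omega), min_eq_left hle]
  -- conclude
  have hne : ∏ i : Fin k, (aa i * S (Bbd u v i)) ≠ 0 := by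
    apply ne_of_gt
    apply Finset.prod_pos
    intro i _
    exact mul_pos (haa i) (hSB i)
  have hcorr : ∏ i : Fin k, ((S (v i) * cc i) / (aa i * S (Bbd u v i))) = 1 := by
    rw [Finset.prod_div_distrib]
    rw [div_eq_one_iff_eq hne]
    rw [hkey]
    apply Finset.prod_congr rfl
    intro i _
    ring
  rw [hcorr, mul_one]
end

section
/- Fix 1 ≤ ℓ ≤ N and words ξ = (ξ_ℓ,…,ξ_N) and b = (b_ℓ,…,b_N) of strictly positive reals. Define ξ' = (ξ'_ℓ,…,ξ'_N) and b' = (b'_{ℓ+1},…,b'_N) by geometric row insertion: ξ'_ℓ = b_ℓ ξ_ℓ, ξ'_k = b_k(ξ'_{k−1} + ξ_k) for ℓ+1 ≤ k ≤ N, and b'_k = b_k · ξ_k ξ'_{k−1} / (ξ_{k−1} ξ'_k) for ℓ+1 ≤ k ≤ N. Define B : ℤ_{≥ℓ} → (0,∞) by B(k) = ∏_{j=ℓ}^{k} b_j and regard ξ as the function ξ(k) = ξ_k on ⟦ℓ,N⟧. Then ξ'_k = (ξ⊙B)(k) for all k ∈ ⟦ℓ,N⟧, and ∏_{j=ℓ+1}^{k}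 b'_j = (B⊗ξ)(k) for all k ∈ ⟦ℓ+1,N⟧. In particular, geometric row insertion coincides with the discrete geometric Pitman transform. -/
open scoped BigOperators

lemma int_Icc_insert_top (a x : ℤ) (h : a ≤ x + 1) :
    Finset.Icc a (x + 1) = insert (x + 1) (Finset.Icc a x) := by
  ext m
  simp only [Finset.mem_Icc, Finset.mem_insert]
  omega

/-- **Lemma 2.12: geometric row insertion coincides with the discrete geometric Pitman
transform.** With `ξ', b'` produced from `(ξ, b)` by geometric row insertion and
`B(x) = ∏_{j=ℓ}^{x} b_j`, one has `ξ'_x = (ξ⊙B)(x)` for `ℓ ≤ x ≤ N` and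
`∏_{j=ℓ+1}^{x} b'_j = (B⊗ξ)(x)` for `ℓ+1 ≤ x ≤ N`. -/
theorem row_insertion_eq_pitman (ℓ N : ℤ) (hℓ : 1 ≤ ℓ) (hN : ℓ ≤ N)
    (ξ b : ℤ → ℝ)
    (hξ : ∀ x : ℤ, ℓ ≤ x → x ≤ N → 0 < ξ x) (hb : ∀ x : ℤ, ℓ ≤ x → x ≤ N → 0 < b x)
    (ξ' b' : ℤ → ℝ)
    (h1 : ξ' ℓ = b ℓ * ξ ℓ)
    (h2 : ∀ x : ℤ, ℓ + 1 ≤ x → x ≤ N → ξ' x = b x * (ξ' (x - 1) + ξ x))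
    (h3 : ∀ x : ℤ, ℓ + 1 ≤ x → x ≤ N →
      b' x = b x * (ξ x * ξ' (x - 1)) / (ξ (x - 1) * ξ' x)) :
    (∀ x : ℤ, ℓ ≤ x → x ≤ N →
        ξ' x = odot ℓ ξ (fun y => ∏ j ∈ Finset.Icc ℓ y, b j) x) ∧
    (∀ x : ℤ, ℓ + 1 ≤ x → x ≤ N →
        (∏ j ∈ Finset.Icc (ℓ + 1) x, b' j)
          = otimes ℓ (fun y => ∏ j ∈ Finset.Icc ℓ y, b j) ξ x) := by
  set B : ℤ → ℝ := fun y => ∏ j ∈ Finset.Icc ℓ y, b j with hBdef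
  have hBpos : ∀ x : ℤ, x ≤ N → 0 < B x := by
    intro x hxN
    exact Finset.prod_pos fun j hj => by
      rw [Finset.mem_Icc] at hj
      exact hb j hj.1 (hj.2.trans hxN)
  have hBstep : ∀ x : ℤ, ℓ ≤ x → B (x + 1) = B x * b (x + 1) := by
    intro x hx
    show (∏ j ∈ Finset.Icc ℓ (x + 1), b j) = _
    rw [int_Icc_insert_top ℓ x (by omega), Finset.prod_insert (by simp)]
    ring
  have hBl : B ℓ = b ℓ := by
    show (∏ j ∈ Finset.Icc ℓ ℓ, b j) = b ℓ
    simp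
  have hclo : ∀ x : ℤ, ℓ ≤ x → clo ℓ B x = B x := by
    intro x hx; simp [clo, not_lt.mpr hx]
  have hsumBase : pitSum ℓ B ξ ℓ = ξ ℓ := by
    unfold pitSum
    rw [Finset.Icc_self, Finset.sum_singleton]
    simp [clo, show ℓ - 1 < ℓ by omega]
  have hsumStep : ∀ x : ℤ, ℓ ≤ x →
      pitSum ℓ B ξ (x + 1) = pitSum ℓ B ξ x + ξ (x + 1) / B x := by
    intro x hx
    unfold pitSum
    rw [int_Icc_insert_top ℓ x (by omega), Finset.sum_insert (by simp)]
    rw [show x + 1 - 1 = x by ring, hclo x hx]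
    ring
  -- main claim 1
  have key1 : ∀ x : ℤ, ℓ ≤ x → x ≤ N → ξ' x = B x * pitSum ℓ B ξ x := by
    intro x hx
    refine Int.le_induction (motive := fun x _ => x ≤ N → ξ' x = B x * pitSum ℓ B ξ x) ?_ ?_ x hx
    · intro _; rw [hsumBase, hBl, h1]
    · intro n hn ih
      intro hnN
      have hn' : n ≤ N := by omega
      rw [h2 (n + 1) (by omega) hnN, show n + 1 - 1 = n by ring, ih hn',
        hsumStep n hn, hBstep n hn]
      have hBn := (hBpos n hn').ne'
      field_simp
  have hξ'pos : ∀ x : ℤ, ℓ ≤ x → x ≤ N → 0 < ξ' x := by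
    intro x hx hxN
    rw [key1 x hx hxN]
    have hps : 0 < pitSum ℓ B ξ x := by
      unfold pitSum
      apply Finset.sum_pos
      · intro m hm
        rw [Finset.mem_Icc] at hm
        apply div_pos (hξ m hm.1 (hm.2.trans hxN))
        rcases lt_or_ge (m - 1) ℓ with h | h
        · simp [clo, h]
        · rw [hclo _ h]; exact hBpos _ (by omega)
      · exact ⟨x, Finset.mem_Icc.mpr ⟨hx, le_refl x⟩⟩
    exact mul_pos (hBpos x hxN) hps
  refine ⟨fun x hx hxN => key1 x hx hxN, ?_⟩
  -- claim 2: ∏_{ℓ+1}^x b' = B x * ξ x / ξ' x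
  have key2 : ∀ x : ℤ, ℓ + 1 ≤ x → x ≤ N →
      (∏ j ∈ Finset.Icc (ℓ + 1) x, b' j) = B x * ξ x / ξ' x := by
    intro x hx
    refine Int.le_induction
      (motive := fun x _ => x ≤ N → (∏ j ∈ Finset.Icc (ℓ + 1) x, b' j) = B x * ξ x / ξ' x) ?_ ?_ x hx
    · intro hxN
      rw [Finset.Icc_self, Finset.prod_singleton,
        h3 (ℓ + 1) le_rfl hxN, show ℓ + 1 - 1 = ℓ by ring, h1,
        hBstep ℓ le_rfl, hBl]
      have := (hξ ℓ le_rfl (by omega)).ne'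
      have := (hξ'pos (ℓ + 1) (by omega) hxN).ne'
      field_simp
    · intro n hn ih
      intro hnN
      have hn' : n ≤ N := by omega
      rw [int_Icc_insert_top (ℓ + 1) n (by omega), Finset.prod_insert (by simp),
        ih hn', h3 (n + 1) (by omega) hnN, show n + 1 - 1 = n by ring,
        hBstep n (by omega)]
      have h1 := (hξ n (by omega) hn').ne'
      have h2 := (hξ'pos n (by omega) hn').ne'
      have h3 := (hξ'pos (n + 1) (by omega) hnN).ne'
      field_simp
  intro x hx hxN
  rw [key2 x hx hxN]
  show _ = ξ x * (pitSum ℓ B ξ x)⁻¹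
  have hps : pitSum ℓ B ξ x = ξ' x / B x := by
    rw [key1 x (by omega) hxN]
    field_simp [(hBpos x hxN).ne']
  rw [hps]
  have := (hξ'pos x (by omega) hxN).ne'
  have := (hBpos x hxN).ne'
  field_simp
end

section
/- Fix r ≥ 1 and functions G, F : ℤ_{≥r} → (0,∞) with conventions G(r−1) = F(r−1) = 1. Then the matrix identity H_r(G)·H_r(F) = H_{r+1}(F⊗G)·H_r(G⊙F) holds entrywise: for all i,j ∈ ℤ_{≥1}, Σ_k H_r(G)(i,k)·H_r(F)(k,j) = Σ_k H_{r+1}(F⊗G)(i,k)·H_r(G⊙F)(k,j) (both sums have finitely many non-zero terms). -/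
open scoped BigOperators

/-- The matrix `H_r(E)`: `H_r(E)(i,j) = 1` if `i = j < r`; `e_i e_{i+1} ⋯ e_j` if
`r ≤ i ≤ j` where `e_x = E(x)/E(x−1)` (convention `E(r−1) = 1`); and `0` otherwise. -/
noncomputable def Hmat (r : ℤ) (E : ℤ → ℝ) : ℤ → ℤ → ℝ :=
  fun i j =>
    if i = j ∧ j < r then 1
    else if r ≤ i ∧ i ≤ j then ∏ x ∈ Finset.Icc i j, E x / clo r E (x - 1)
    else 0

lemma Hmat_zero {r : ℤ} {E : ℤ → ℝ} {i j : ℤ} (h1 : ¬(i = j ∧ j < r))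
    (h2 : ¬(r ≤ i ∧ i ≤ j)) : Hmat r E i j = 0 := by
  unfold Hmat; rw [if_neg h1, if_neg h2]

lemma clo_pos_s7 {r : ℤ} {E : ℤ → ℝ} (hE : ∀ x, r ≤ x → 0 < E x) (y : ℤ) : 0 < clo r E y := by
  unfold clo; split
  · norm_num
  · exact hE y (by omega)

lemma Icc_insert_top {a b : ℤ} (h : a ≤ b + 1) :
    Finset.Icc a (b + 1) = insert (b + 1) (Finset.Icc a b) := by
  ext x; simp only [Finset.mem_Icc, Finset.mem_insert]; omega

lemma Hmat_eq_of_le {r : ℤ} {E : ℤ → ℝ} (hE : ∀ x, r ≤ x → 0 < E x) {i j : ℤ}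
    (hi : r ≤ i) (hij : i ≤ j) : Hmat r E i j = E j / clo r E (i - 1) := by
  unfold Hmat
  rw [if_neg (by omega), if_pos ⟨hi, hij⟩]
  refine Int.le_induction (motive := fun j _ => ∏ x ∈ Finset.Icc i j, E x / clo r E (x - 1) = E j / clo r E (i - 1)) ?_ ?_ j hij
  · show ∏ x ∈ Finset.Icc i i, E x / clo r E (x - 1) = E i / clo r E (i - 1)
    rw [Finset.Icc_self, Finset.prod_singleton]
  · intro j hj ih
    show ∏ x ∈ Finset.Icc i (j + 1), E x / clo r E (x - 1) = E (j + 1) / clo r E (i - 1)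
    rw [Icc_insert_top (by omega), Finset.prod_insert (by simp [Finset.mem_Icc]), ih]
    have h1 : clo r E (j + 1 - 1) = E j := by
      unfold clo; rw [if_neg (by omega)]; norm_num
    rw [h1]
    have h2 : E j ≠ 0 := ne_of_gt (hE j (by omega))
    field_simp

lemma telescope_Icc (f : ℤ → ℝ) {i j : ℤ} (hij : i ≤ j) :
    ∑ k ∈ Finset.Icc i j, (f k - f (k - 1)) = f j - f (i - 1) := by
  refine Int.le_induction (motive := fun j _ => ∑ k ∈ Finset.Icc i j, (f k - f (k - 1)) = f j - f (i - 1)) ?_ ?_ j hij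
  · show ∑ k ∈ Finset.Icc i i, (f k - f (k - 1)) = f i - f (i - 1)
    rw [Finset.Icc_self, Finset.sum_singleton]
  · intro j hj ih
    show ∑ k ∈ Finset.Icc i (j + 1), (f k - f (k - 1)) = f (j + 1) - f (i - 1)
    rw [Icc_insert_top (by omega), Finset.sum_insert (by simp [Finset.mem_Icc]), ih]
    norm_num

lemma pitSum_sub {r : ℤ} (F G : ℤ → ℝ) {x : ℤ} (hx : r ≤ x) :
    pitSum r F G x - pitSum r F G (x - 1) = G x / clo r F (x - 1) := by
  unfold pitSum
  have h : Finset.Icc r x = insert x (Finset.Icc r (x - 1)) := by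
    ext y; simp only [Finset.mem_Icc, Finset.mem_insert]; omega
  rw [h, Finset.sum_insert (by simp [Finset.mem_Icc])]
  ring

lemma pitSum_pos_s7 {r : ℤ} {F G : ℤ → ℝ} (hG : ∀ x, r ≤ x → 0 < G x)
    (hF : ∀ x, r ≤ x → 0 < F x) {x : ℤ} (hx : r ≤ x) : 0 < pitSum r F G x := by
  unfold pitSum
  apply Finset.sum_pos
  · intro m hm
    rw [Finset.mem_Icc] at hm
    exact div_pos (hG m hm.1) (clo_pos_s7 hF _)
  · exact Finset.nonempty_Icc.mpr hx

lemma pitSum_base (r : ℤ) (F G : ℤ → ℝ) : pitSum r F G r = G r := by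
  unfold pitSum
  rw [Finset.Icc_self, Finset.sum_singleton]
  have : clo r F (r - 1) = 1 := by unfold clo; rw [if_pos (by omega)]
  rw [this, div_one]

lemma clo_otimes {r : ℤ} {F G : ℤ → ℝ} (hG : ∀ x, r ≤ x → 0 < G x) {y : ℤ} (hy : r ≤ y) :
    clo (r + 1) (otimes r F G) y = G y * (pitSum r F G y)⁻¹ := by
  unfold clo
  split_ifs with h
  · have hyr : y = r := by omega
    rw [hyr, pitSum_base, mul_inv_cancel₀ (ne_of_gt (hG r le_rfl))]
  · rfl

/-- **The local matrix identity (2.24) of Noumi–Yamada:**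
`H_r(G)·H_r(F) = H_{r+1}(F⊗G)·H_r(G⊙F)`, entrywise. -/
theorem H_matrix_identity (r : ℤ) (hr : 1 ≤ r) (G F : ℤ → ℝ)
    (hG : ∀ x : ℤ, r ≤ x → 0 < G x) (hF : ∀ x : ℤ, r ≤ x → 0 < F x) :
    ∀ i j : ℤ, 1 ≤ i → 1 ≤ j →
      (∑' k : ℤ, Hmat r G i k * Hmat r F k j)
        = ∑' k : ℤ, Hmat (r + 1) (otimes r F G) i k * Hmat r (odot r G F) k j := by
  intro i j hi1 hj1
  have hPpos : ∀ x, r ≤ x → 0 < pitSum r F G x := fun x hx => pitSum_pos_s7 hG hF hx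
  have hSpos : ∀ x, r ≤ x → 0 < odot r G F x := fun x hx => mul_pos (hF x hx) (hPpos x hx)
  by_cases hi : r ≤ i
  · by_cases hij : i ≤ j
    · -- main case r ≤ i ≤ j
      have hj : r ≤ j := le_trans hi hij
      have hL : (∑' k : ℤ, Hmat r G i k * Hmat r F k j)
          = (F j / clo r G (i - 1)) * (pitSum r F G j - pitSum r F G (i - 1)) := by
        rw [tsum_eq_sum (s := Finset.Icc i j) (f := fun k => Hmat r G i k * Hmat r F k j)
          (by
            intro k hk
            simp only [Finset.mem_Icc, not_and, not_le] at hk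
            rcases lt_or_ge k i with h | h
            · exact mul_eq_zero_of_left (Hmat_zero (by omega) (by omega)) _
            · exact mul_eq_zero_of_right _ (Hmat_zero (by omega) (by omega)))]
        rw [← telescope_Icc (pitSum r F G) hij, Finset.mul_sum]
        apply Finset.sum_congr rfl
        intro k hk
        rw [Finset.mem_Icc] at hk
        have hrk : r ≤ k := le_trans hi hk.1
        rw [Hmat_eq_of_le hG hi hk.1, Hmat_eq_of_le hF hrk hk.2,
          pitSum_sub F G hrk]
        ring
      rw [hL]
      rcases eq_or_lt_of_le hi with hir | hir
      · -- i = r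
        have hR : (∑' k : ℤ, Hmat (r + 1) (otimes r F G) i k * Hmat r (odot r G F) k j)
            = odot r G F j := by
          rw [tsum_eq_single i (by
            intro k hk
            exact mul_eq_zero_of_left (Hmat_zero (by omega) (by omega)) _)]
          have h1 : Hmat (r + 1) (otimes r F G) i i = 1 := by
            unfold Hmat; rw [if_pos ⟨rfl, by omega⟩]
          rw [h1, one_mul, Hmat_eq_of_le hSpos hi hij]
          have h2 : clo r (odot r G F) (i - 1) = 1 := by
            unfold clo; rw [if_pos (by omega)]
          rw [h2, div_one]
        rw [hR]
        have h3 : clo r G (i - 1) = 1 := by unfold clo; rw [if_pos (by omega)]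
        have h4 : pitSum r F G (i - 1) = 0 := by
          unfold pitSum; rw [Finset.Icc_eq_empty (by omega), Finset.sum_empty]
        rw [h3, h4]
        unfold odot
        ring
      · -- r + 1 ≤ i
        have hir' : r + 1 ≤ i := hir
        have hTpos : ∀ x, r + 1 ≤ x → 0 < otimes r F G x := fun x hx =>
          mul_pos (hG x (by omega)) (inv_pos.mpr (hPpos x (by omega)))
        set C : ℝ := F j * pitSum r F G j * pitSum r F G (i - 1) / G (i - 1) with hC
        have tel := telescope_Icc (fun x => -(pitSum r F G x)⁻¹) hij
        have hR : (∑' k : ℤ, Hmat (r + 1) (otimes r F G) i k * Hmat r (odot r G F) k j)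
            = C * (-(pitSum r F G j)⁻¹ - -(pitSum r F G (i - 1))⁻¹) := by
          rw [tsum_eq_sum (s := Finset.Icc i j)
            (f := fun k => Hmat (r + 1) (otimes r F G) i k * Hmat r (odot r G F) k j)
            (by
              intro k hk
              simp only [Finset.mem_Icc, not_and, not_le] at hk
              rcases lt_or_ge k i with h | h
              · exact mul_eq_zero_of_left (Hmat_zero (by omega) (by omega)) _
              · exact mul_eq_zero_of_right _ (Hmat_zero (by omega) (by omega)))]
          rw [← tel, Finset.mul_sum]
          apply Finset.sum_congr rfl
          intro k hk
          rw [Finset.mem_Icc] at hk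
          have hrk : r ≤ k := by omega
          have hrk1 : r ≤ k - 1 := by omega
          rw [Hmat_eq_of_le hTpos hir' hk.1, Hmat_eq_of_le hSpos hrk hk.2]
          have e1 : clo (r + 1) (otimes r F G) (i - 1) =
              G (i - 1) * (pitSum r F G (i - 1))⁻¹ := clo_otimes hG (by omega)
          have e2 : clo r (odot r G F) (k - 1) = F (k - 1) * pitSum r F G (k - 1) := by
            unfold clo odot; rw [if_neg (by omega)]
          rw [e1, e2]
          unfold otimes odot
          have hsub : pitSum r F G k - pitSum r F G (k - 1) = G k / F (k - 1) := by
            rw [pitSum_sub F G hrk]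
            congr 1
            unfold clo; rw [if_neg (by omega)]
          have n1 : pitSum r F G k ≠ 0 := ne_of_gt (hPpos k hrk)
          have n2 : pitSum r F G (k - 1) ≠ 0 := ne_of_gt (hPpos _ hrk1)
          have n3 : G (i - 1) ≠ 0 := ne_of_gt (hG _ (by omega))
          have n4 : F (k - 1) ≠ 0 := ne_of_gt (hF _ hrk1)
          have n5 : pitSum r F G (i - 1) ≠ 0 := ne_of_gt (hPpos _ (by omega))
          have hGk : G k = (pitSum r F G k - pitSum r F G (k - 1)) * F (k - 1) := by
            rw [hsub]; field_simp
          rw [hC, hGk]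
          field_simp
          ring
        rw [hR]
        have h3 : clo r G (i - 1) = G (i - 1) := by unfold clo; rw [if_neg (by omega)]
        rw [h3, hC]
        have n3 : G (i - 1) ≠ 0 := ne_of_gt (hG _ (by omega))
        have n5 : pitSum r F G (i - 1) ≠ 0 := ne_of_gt (hPpos _ (by omega))
        have n6 : pitSum r F G j ≠ 0 := ne_of_gt (hPpos _ hj)
        field_simp
        ring
    · -- r ≤ i, j < i : both sides zero
      have hz1 : (fun k : ℤ => Hmat r G i k * Hmat r F k j) = fun _ => (0 : ℝ) := by
        funext k
        rcases lt_or_ge k i with h | h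
        · exact mul_eq_zero_of_left (Hmat_zero (by omega) (by omega)) _
        · exact mul_eq_zero_of_right _ (Hmat_zero (by omega) (by omega))
      have hz2 : (fun k : ℤ => Hmat (r + 1) (otimes r F G) i k * Hmat r (odot r G F) k j)
          = fun _ => (0 : ℝ) := by
        funext k
        rcases lt_or_ge k i with h | h
        · exact mul_eq_zero_of_left (Hmat_zero (by omega) (by omega)) _
        · exact mul_eq_zero_of_right _ (Hmat_zero (by omega) (by omega))
      rw [hz1, hz2]
  · -- i < r
    have hL : (∑' k : ℤ, Hmat r G i k * Hmat r F k j) = Hmat r F i j := by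
      rw [tsum_eq_single i (by
        intro k hk
        exact mul_eq_zero_of_left (Hmat_zero (by omega) (by omega)) _)]
      have h1 : Hmat r G i i = 1 := by unfold Hmat; rw [if_pos ⟨rfl, by omega⟩]
      rw [h1, one_mul]
    have hR : (∑' k : ℤ, Hmat (r + 1) (otimes r F G) i k * Hmat r (odot r G F) k j)
        = Hmat r (odot r G F) i j := by
      rw [tsum_eq_single i (by
        intro k hk
        exact mul_eq_zero_of_left (Hmat_zero (by omega) (by omega)) _)]
      have h1 : Hmat (r + 1) (otimes r F G) i i = 1 := by
        unfold Hmat; rw [if_pos ⟨rfl, by omega⟩]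
      rw [h1, one_mul]
    rw [hL, hR]
    unfold Hmat
    have h2 : ¬(r ≤ i ∧ i ≤ j) := by omega
    by_cases h : i = j ∧ j < r
    · rw [if_pos h, if_pos h]
    · rw [if_neg h, if_neg h, if_neg h2, if_neg h2]
end

section
/- Let f_1, f_2 : [0,∞) → ℝ be continuous and for 0 ≤ x < y define s(x,y) := log ∫_x^y e^{f_2(r)−f_1(r)} dr. Then for all 0 < u < v, s(u,v) − s(0,v) − s(0,u) = log ∫_u^v e^{f_2(t) − f_1(t) − 2 s(0,t)} dt. Equivalently, the semi-discrete point-to-point free energy with n = 2 levels is invariant under the semi-discrete geometric Pitman transform: f[(u,2)→(v,1)] = (𝒯f)[(u,2)→(v,1)], where (𝒯f)_1(t) = f_1(t) + log∫_0^t e^{f_2(r)−f_1(r)}dr and (𝒯f)_2(t) = f_2(t) − log∫_0^t e^{f_2(r)−f_1(r)}dr. -/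
open scoped BigOperators

/-- **The identity (3.5) (Step 1 of the proof of Theorem 3.4):** with
`s(x,y) = log ∫_x^y e^{f_2 − f_1}`, for `0 < u < v`,
`s(u,v) − s(0,v) − s(0,u) = log ∫_u^v e^{f_2(t) − f_1(t) − 2 s(0,t)} dt`;
equivalently, the semi-discrete two-level point-to-point free energy is invariant
under the semi-discrete geometric Pitman transform. -/
theorem semidiscrete_two_level_identity (f₁ f₂ : ℝ → ℝ)
    (h₁ : ContinuousOn f₁ (Set.Ici 0)) (h₂ : ContinuousOn f₂ (Set.Ici 0))
    (h₁0 : f₁ 0 = 0) (h₂0 : f₂ 0 = 0)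
    (u v : ℝ) (hu : 0 < u) (huv : u < v)
    (s : ℝ → ℝ → ℝ)
    (hs : ∀ x y : ℝ, s x y = Real.log (∫ t in x..y, Real.exp (f₂ t - f₁ t))) :
    s u v - s 0 v - s 0 u
      = Real.log (∫ t in u..v, Real.exp (f₂ t - f₁ t - 2 * s 0 t)) := by
  set g : ℝ → ℝ := fun t => Real.exp (f₂ t - f₁ t) with hg_def
  have hg : ContinuousOn g (Set.Ici 0) :=
    Real.continuous_exp.comp_continuousOn (h₂.sub h₁)
  have hgpos : ∀ t : ℝ, 0 < g t := fun t => Real.exp_pos _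
  have hInt : ∀ a b : ℝ, 0 ≤ a → 0 ≤ b →
      IntervalIntegrable g MeasureTheory.volume a b := by
    intro a b ha hb
    refine (hg.mono ?_).intervalIntegrable
    intro x hx
    rcases Set.mem_uIcc.mp hx with ⟨h, _⟩ | ⟨h, _⟩
    · exact le_trans ha h
    · exact le_trans hb h
  set F : ℝ → ℝ := fun t => ∫ r in (0:ℝ)..t, g r with hF_def
  have hFpos : ∀ t : ℝ, 0 < t → 0 < F t := by
    intro t ht
    exact intervalIntegral.intervalIntegral_pos_of_pos_on (hInt 0 t le_rfl ht.le)
      (fun x _ => hgpos x) ht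
  have hFderiv : ∀ t : ℝ, 0 < t → HasDerivAt F (g t) t := by
    intro t ht
    have hnhds : Set.Ici (0:ℝ) ∈ nhds t :=
      mem_nhds_iff.mpr ⟨Set.Ioi 0, Set.Ioi_subset_Ici_self, isOpen_Ioi, ht⟩
    have hcont : ContinuousAt g t := hg.continuousAt hnhds
    exact intervalIntegral.integral_hasDerivAt_right (hInt 0 t le_rfl ht.le)
      ⟨Set.Ici 0, hnhds, hg.aestronglyMeasurable measurableSet_Ici⟩ hcont
  -- derivative of G = -(F)⁻¹
  have hGderiv : ∀ t ∈ Set.uIcc u v, HasDerivAt (fun t => -(F t)⁻¹) (g t / (F t) ^ 2) t := by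
    intro t ht
    rw [Set.uIcc_of_le huv.le] at ht
    have htpos : 0 < t := lt_of_lt_of_le hu ht.1
    have hFne : F t ≠ 0 := (hFpos t htpos).ne'
    have := ((hFderiv t htpos).inv hFne).neg
    exact this.congr_deriv (by ring)
  have hFcont : ContinuousOn F (Set.uIcc u v) := fun t ht =>
    ((hFderiv t (lt_of_lt_of_le hu ((Set.uIcc_of_le huv.le ▸ ht).1))).continuousAt).continuousWithinAt
  have hGcont : ContinuousOn (fun t => g t / (F t) ^ 2) (Set.uIcc u v) := by
    apply ContinuousOn.div
    · exact hg.mono (fun x hx => le_trans hu.le (Set.uIcc_of_le huv.le ▸ hx).1)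
    · exact hFcont.pow 2
    · intro t ht
      exact pow_ne_zero 2 (hFpos t (lt_of_lt_of_le hu ((Set.uIcc_of_le huv.le ▸ ht).1))).ne'
  have hFTC : ∫ t in u..v, g t / (F t) ^ 2 = (-(F v)⁻¹) - (-(F u)⁻¹) :=
    intervalIntegral.integral_eq_sub_of_hasDerivAt hGderiv (hGcont.intervalIntegrable)
  -- rewrite the RHS integrand
  have hcongr : (∫ t in u..v, Real.exp (f₂ t - f₁ t - 2 * s 0 t))
      = ∫ t in u..v, g t / (F t) ^ 2 := by
    apply intervalIntegral.integral_congr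
    intro t ht
    rw [Set.uIcc_of_le huv.le] at ht
    have htpos : 0 < t := lt_of_lt_of_le hu ht.1
    have hFt : 0 < F t := hFpos t htpos
    have hst : s 0 t = Real.log (F t) := hs 0 t
    show Real.exp (f₂ t - f₁ t - 2 * s 0 t) = g t / F t ^ 2
    rw [hst, sub_eq_add_neg, Real.exp_add]
    rw [show -(2 * Real.log (F t)) = Real.log ((F t) ^ 2)⁻¹ by
      rw [Real.log_inv, Real.log_pow]; push_cast; ring]
    rw [Real.exp_log (by positivity)]
    ring
  -- additivity: F v - F u = ∫_u^v g
  have hadd : (∫ t in u..v, g t) = F v - F u := by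
    rw [hF_def]
    rw [eq_sub_iff_add_eq]
    rw [add_comm]
    exact intervalIntegral.integral_add_adjacent_intervals (hInt 0 u le_rfl hu.le)
      (hInt u v hu.le (hu.trans huv).le)
  have hFu : 0 < F u := hFpos u hu
  have hFv : 0 < F v := hFpos v (hu.trans huv)
  have hIpos : 0 < ∫ t in u..v, g t := by
    exact intervalIntegral.intervalIntegral_pos_of_pos_on (hInt u v hu.le (hu.trans huv).le)
      (fun x _ => hgpos x) huv
  rw [hcongr, hFTC, hs, hs, hs]
  have hrw : -(F v)⁻¹ - -(F u)⁻¹ = (∫ t in u..v, g t) / (F u * F v) := by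
    rw [hadd]; field_simp; ring
  rw [hrw, Real.log_div hIpos.ne' (by positivity), Real.log_mul hFu.ne' hFv.ne']
  show Real.log (∫ t in u..v, g t) - Real.log (F v) - Real.log (F u) = _
  ring
end
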